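/- Let B > 0 and consider the PB game with four projects p_1, p_2, p_3, p_4, sixteen voters v_1, …, v_16 with approvals A(p_1) = {v_1,…,v_5}, A(p_2) = {v_13,v_14,v_15,v_16,v_1}, A(p_3) = {v_5,…,v_9}, A(p_4) = {v_9,…,v_13}, budget B, and zero delivery costs. For every tie-breaking order on the projects this game has no MES-Apr-Nash equilibrium. -/

import Mathlib

open scoped Classical

set_option linter.unusedSectionVars false
set_option linter.unusedVariables false

noncomputable section

namespace PB

variable {P V : Type} [Fintype P] [DecidableEq P] [Fintype V] [DecidableEq V]

/-- The set of voters that approve project `p`. -/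
def approvers (A : V → Finset P) (p : P) : Finset V :=
  Finset.univ.filter fun v => p ∈ A v

/-- A key whose second lexicographic component is an embedding into `ℕ` is injective. -/
lemma lexKey_inj {γ : Type} (g : P → γ) (tb : P ↪ ℕ) :
    Function.Injective fun p : P => toLex ((g p, tb p) : γ × ℕ) := by
  intro a b h
  have h2 : ((g a, tb a) : γ × ℕ) = (g b, tb b) := congrArg (fun x => ofLex x) h
  exact tb.injective (congrArg Prod.snd h2)

/-- The list of all projects, sorted increasingly by an injective key. -/
def prioList {κ : Type} [LinearOrder κ] (key : P → κ) (hk : Function.Injective key) : List P :=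
  letI : DecidableRel fun p q : P => key p ≤ key q :=
    fun a b => inferInstanceAs (Decidable (key a ≤ key b))
  letI : IsTrans P fun p q => key p ≤ key q := ⟨fun _ _ _ h1 h2 => le_trans h1 h2⟩
  letI : Std.Antisymm fun p q : P => key p ≤ key q := ⟨fun _ _ h1 h2 => hk (le_antisymm h1 h2)⟩
  letI : Std.Total fun p q : P => key p ≤ key q := ⟨fun _ _ => le_total _ _⟩
  Finset.sort Finset.univ (fun p q => key p ≤ key q)

/-- Greedy selection of projects along a list: a project is added to the winning set
whenever its cost still fits into the remaining budget. -/
def greedy (cost : P → ℝ) : ℝ → List P → Finset P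
  | _, [] => ∅
  | budget, p :: rest =>
      if cost p ≤ budget then insert p (greedy cost (budget - cost p) rest)
      else greedy cost budget rest

/-- The priority key of the BasicAV rule: nonincreasing approval score,
ties broken by the tie-breaking order `tb` (smaller `tb` value = preferred). -/
def basicAVkey (A : V → Finset P) (tb : P ↪ ℕ) (p : P) : ℕᵒᵈ ×ₗ ℕ :=
  toLex (OrderDual.toDual (approvers A p).card, tb p)

/-- The BasicAV rule. -/
def basicAV (A : V → Finset P) (tb : P ↪ ℕ) (B : ℝ) (cost : P → ℝ) : Finset P :=
  greedy cost B (prioList (basicAVkey A tb) (lexKey_inj _ tb))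

/-- The priority key of the AV/Cost rule: nonincreasing approval-to-cost ratio
(computed in `ℝ≥0∞`, so that zero-cost projects come first),
ties broken by the tie-breaking order `tb`. -/
def avCostKey (A : V → Finset P) (tb : P ↪ ℕ) (cost : P → ℝ) (p : P) : ENNRealᵒᵈ ×ₗ ℕ :=
  toLex (OrderDual.toDual (((approvers A p).card : ENNReal) / ENNReal.ofReal (cost p)), tb p)

/-- The AV/Cost rule. -/
def avCost (A : V → Finset P) (tb : P ↪ ℕ) (B : ℝ) (cost : P → ℝ) : Finset P :=
  greedy cost B (prioList (avCostKey A tb cost) (lexKey_inj _ tb))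

/-- The element of a nonempty finite set minimizing an injective key. -/
def argminBy {κ : Type} [LinearOrder κ] (key : P → κ) (hk : Function.Injective key)
    (R : Finset P) (hR : R.Nonempty) : P :=
  letI : LinearOrder P := LinearOrder.lift' key hk
  R.min' hR

lemma argminBy_mem {κ : Type} [LinearOrder κ] (key : P → κ) (hk : Function.Injective key)
    (R : Finset P) (hR : R.Nonempty) : argminBy key hk R hR ∈ R := by
  letI : LinearOrder P := LinearOrder.lift' key hk
  exact Finset.min'_mem R hR

/-- The time at which the supporters of `p` (jointly earning one unit of money per
unit of time, currently holding the amounts given by `b`) will have collected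
`cost p` money, measured from the current moment. -/
def phragTau (A : V → Finset P) (cost : P → ℝ) (b : V → ℝ) (p : P) : ℝ :=
  (cost p - ∑ v ∈ approvers A p, b v) / ((approvers A p).card : ℝ)

/-- One pass of the Phragmén rule: repeatedly take the remaining project whose
purchase event comes first (ties broken by `tb`); advance all bank accounts to that
moment; if the project fits in the remaining budget it is bought (and its supporters'
accounts are reset), otherwise it is removed from consideration. -/
def phragmenAux (A : V → Finset P) (tb : P ↪ ℕ) (cost : P → ℝ) :
    Finset P → ℝ → (V → ℝ) → Finset P
  | R, budget, b =>
    if hR : R.Nonempty then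
      let p := argminBy (fun p => toLex ((phragTau A cost b p, tb p) : ℝ × ℕ))
        (lexKey_inj _ tb) R hR
      have hp : p ∈ R := argminBy_mem _ _ _ _
      have hcard : (R.erase p).card < R.card := Finset.card_erase_lt_of_mem hp
      if cost p ≤ budget then
        insert p (phragmenAux A tb cost (R.erase p) (budget - cost p)
          (fun v => if v ∈ approvers A p then 0 else b v + phragTau A cost b p))
      else
        phragmenAux A tb cost (R.erase p) budget (fun v => b v + phragTau A cost b p)
    else ∅
  termination_by R _ _ => R.card

/-- The Phragmén rule. -/
def phragmen (A : V → Finset P) (tb : P ↪ ℕ) (B : ℝ) (cost : P → ℝ) : Finset P :=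
  phragmenAux A tb cost Finset.univ B (fun _ => 0)

/-- The set of coefficients `α` for which project `p` is exactly affordable, where
`contrib bv α c` is the amount a voter currently holding `bv` contributes towards a
project of cost `c` under coefficient `α`. -/
def affordSet (A : V → Finset P) (contrib : ℝ → ℝ → ℝ → ℝ) (cost : P → ℝ)
    (b : V → ℝ) (p : P) : Set ℝ :=
  {α : ℝ | ∑ v ∈ approvers A p, contrib (b v) α (cost p) = cost p}

/-- One pass of the Method of Equal Shares, parametrized by the contribution
function `contrib`: repeatedly select, among the remaining affordable projects, the
one with the smallest affordability coefficient (ties broken by `tb`) and charge its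
supporters accordingly; stop when no remaining project is affordable. -/
def mesAux (A : V → Finset P) (tb : P ↪ ℕ) (contrib : ℝ → ℝ → ℝ → ℝ) (cost : P → ℝ) :
    Finset P → (V → ℝ) → Finset P
  | R, b =>
    let F := R.filter fun p => (affordSet A contrib cost b p).Nonempty
    if hF : F.Nonempty then
      let p := argminBy
        (fun p => toLex ((sInf (affordSet A contrib cost b p), tb p) : ℝ × ℕ))
        (lexKey_inj _ tb) F hF
      have hp : p ∈ R := Finset.mem_of_mem_filter p (argminBy_mem _ _ _ _)
      have hcard : (R.erase p).card < R.card := Finset.card_erase_lt_of_mem hp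
      insert p (mesAux A tb contrib cost (R.erase p)
        (fun v => if v ∈ approvers A p then
            b v - contrib (b v) (sInf (affordSet A contrib cost b p)) (cost p)
          else b v))
    else ∅
  termination_by R _ => R.card

/-- The Method of Equal Shares with cost utilities: a voter holding `bv` contributes
`min bv (α * c)` towards a project of cost `c`. -/
def mesCost (A : V → Finset P) (tb : P ↪ ℕ) (B : ℝ) (cost : P → ℝ) : Finset P :=
  mesAux A tb (fun bv α c => min bv (α * c)) cost Finset.univ
    (fun _ => B / (Fintype.card V : ℝ))

/-- The Method of Equal Shares with approval utilities: a voter holding `bv`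
contributes `min bv α`. -/
def mesApr (A : V → Finset P) (tb : P ↪ ℕ) (B : ℝ) (cost : P → ℝ) : Finset P :=
  mesAux A tb (fun bv α _ => min bv α) cost Finset.univ
    (fun _ => B / (Fintype.card V : ℝ))

/-- The payoff of project `p` in the cost game: `cost p - d p` if `p` is funded,
and `0` otherwise. -/
def payoff (d cost : P → ℝ) (W : Finset P) (p : P) : ℝ :=
  if p ∈ W then cost p - d p else 0

/-- `c` is a (pure) Nash equilibrium of the cost game with delivery costs `d` under
the PB rule `rule`: all reported costs are nonnegative and no project can strictly
increase its payoff by unilaterally reporting a different (nonnegative) cost. -/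
def isNE (rule : (P → ℝ) → Finset P) (d : P → ℝ) (c : P → ℝ) : Prop :=
  (∀ p, 0 ≤ c p) ∧
  ∀ (p : P) (x : ℝ), 0 ≤ x →
    payoff d (Function.update c p x) (rule (Function.update c p x)) p ≤
      payoff d c (rule c) p

/-- `tb` is an approval-to-delivery-cost (A/D) tie-breaking order: projects with zero
delivery cost come first, and among projects with positive delivery costs a strictly
larger approval-to-delivery-cost ratio means a strictly better position. -/
def isADOrder (A : V → Finset P) (d : P → ℝ) (tb : P ↪ ℕ) : Prop :=
  (∀ p q : P, d p = 0 → 0 < d q → tb p < tb q) ∧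
  (∀ p q : P, 0 < d p → 0 < d q →
    ((approvers A q).card : ℝ) / d q < ((approvers A p).card : ℝ) / d p → tb p < tb q)

/-- The approval-proportional strategy profile. -/
def apProfile (A : V → Finset P) (B : ℝ) (p : P) : ℝ :=
  B * (approvers A p).card / (∑ q : P, ((approvers A q).card : ℝ))

/-- Plurality preferences: every voter approves exactly one project. -/
def plurality (A : V → Finset P) : Prop := ∀ v, (A v).card = 1

/-- Party-list preferences: any two ballots are equal or disjoint. -/
def partyList (A : V → Finset P) : Prop := ∀ v w, A v = A w ∨ Disjoint (A v) (A w)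

/-- The party of a project: all projects approved by exactly the same voters. -/
def party (A : V → Finset P) (p : P) : Finset P :=
  Finset.univ.filter fun q => approvers A q = approvers A p

end PB

/-- The approval profile of the four-project, sixteen-voter example: projects
`0,1,2,3` are `p₁,p₂,p₃,p₄` and voter `i : Fin 16` is `v_{i+1}`;
`A(p₁) = {v₁,…,v₅}`, `A(p₂) = {v₁₃,…,v₁₆,v₁}`, `A(p₃) = {v₅,…,v₉}`,
`A(p₄) = {v₉,…,v₁₃}`. -/
def exA19 : Fin 16 → Finset (Fin 4) := fun v =>
  if v = 0 then {0, 1}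
  else if v.val ≤ 3 then {0}
  else if v = 4 then {0, 2}
  else if v.val ≤ 7 then {2}
  else if v = 8 then {2, 3}
  else if v.val ≤ 11 then {3}
  else if v = 12 then {3, 1}
  else {1}
namespace NEP
open PB Finset

/-! ### Basic definitions specialised to the example -/

abbrev Appr (p : Fin 4) : Finset (Fin 16) := PB.approvers exA19 p

noncomputable def afd (cost : Fin 4 → ℝ) (b : Fin 16 → ℝ) (p : Fin 4) : Set ℝ :=
  PB.affordSet exA19 (fun bv α _ => min bv α) cost b p

lemma mem_afd {cost : Fin 4 → ℝ} {b : Fin 16 → ℝ} {p : Fin 4} {α : ℝ} :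
    α ∈ afd cost b p ↔ ∑ v ∈ Appr p, min (b v) α = cost p := Iff.rfl

noncomputable def alf (cost : Fin 4 → ℝ) (b : Fin 16 → ℝ) (p : Fin 4) : ℝ :=
  sInf (afd cost b p)

noncomputable def key (tb : Fin 4 ↪ ℕ) (cost : Fin 4 → ℝ) (b : Fin 16 → ℝ) (p : Fin 4) :
    ℝ ×ₗ ℕ := toLex (alf cost b p, tb p)

noncomputable def chg (cost : Fin 4 → ℝ) (b : Fin 16 → ℝ) (q : Fin 4) : Fin 16 → ℝ :=
  fun v => if v ∈ Appr q then b v - min (b v) (alf cost b q) else b v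

noncomputable def run (tb : Fin 4 ↪ ℕ) (cost : Fin 4 → ℝ) (R : Finset (Fin 4))
    (b : Fin 16 → ℝ) : Finset (Fin 4) :=
  PB.mesAux exA19 tb (fun bv α _ => min bv α) cost R b

/-! ### argmin facts -/

lemma argminBy_le {κ : Type} [LinearOrder κ] (key : Fin 4 → κ) (hk : Function.Injective key)
    (R : Finset (Fin 4)) (hR : R.Nonempty) (r : Fin 4) (hr : r ∈ R) :
    key (PB.argminBy key hk R hR) ≤ key r := by
  letI : LinearOrder (Fin 4) := LinearOrder.lift' key hk
  exact Finset.min'_le R r hr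

lemma argminBy_eq {κ : Type} [LinearOrder κ] (key : Fin 4 → κ) (hk : Function.Injective key)
    (R : Finset (Fin 4)) (hR : R.Nonempty) (q : Fin 4) (hq : q ∈ R)
    (hmin : ∀ r ∈ R, key q ≤ key r) : PB.argminBy key hk R hR = q := by
  apply hk
  exact le_antisymm (hmin _ (PB.argminBy_mem key hk R hR))
    (argminBy_le key hk R hR q hq) |>.symm

end NEP
namespace NEP
open PB Finset

lemma Dcard : ∀ p : Fin 4, (Appr p).card = 5 := by decide

lemma Dne (p : Fin 4) : (Appr p).Nonempty := by
  rw [← Finset.card_pos, Dcard]; norm_num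

/-! ### affordability facts -/

lemma afd_continuous (b : Fin 16 → ℝ) (p : Fin 4) :
    Continuous (fun α : ℝ => ∑ v ∈ Appr p, min (b v) α) :=
  continuous_finset_sum _ fun v _ => continuous_const.min continuous_id

/-- g1a : affordability implies cost below pool -/
lemma cost_le_pool {cost : Fin 4 → ℝ} {b : Fin 16 → ℝ} {p : Fin 4}
    (h : (afd cost b p).Nonempty) : cost p ≤ ∑ v ∈ Appr p, b v := by
  obtain ⟨α, hα⟩ := h
  rw [mem_afd] at hα
  rw [← hα]
  exact Finset.sum_le_sum fun v _ => min_le_left _ _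

/-- g1b : cost below pool implies affordability -/
lemma afd_nonempty {cost : Fin 4 → ℝ} {b : Fin 16 → ℝ} {p : Fin 4} {M : ℝ}
    (hM : 0 ≤ M) (hc0 : 0 ≤ cost p) (hb0 : ∀ v, 0 ≤ b v) (hbM : ∀ v, b v ≤ M)
    (hle : cost p ≤ ∑ v ∈ Appr p, b v) : (afd cost b p).Nonempty := by
  have h0 : ∑ v ∈ Appr p, min (b v) (0:ℝ) = 0 := by
    rw [Finset.sum_congr rfl fun v _ => min_eq_right (hb0 v)]; simp
  have hMs : ∑ v ∈ Appr p, min (b v) M = ∑ v ∈ Appr p, b v :=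
    Finset.sum_congr rfl fun v _ => min_eq_left (hbM v)
  have := intermediate_value_Icc hM ((afd_continuous b p).continuousOn)
  have hmem : cost p ∈ Set.Icc (∑ v ∈ Appr p, min (b v) (0:ℝ)) (∑ v ∈ Appr p, min (b v) M) := by
    rw [h0, hMs]; exact ⟨hc0, hle⟩
  obtain ⟨α, _, hα⟩ := this hmem
  exact ⟨α, hα⟩

/-- every element of the affordability set is nonnegative -/
lemma afd_subset_nonneg {cost : Fin 4 → ℝ} {b : Fin 16 → ℝ} {p : Fin 4}
    (hc0 : 0 ≤ cost p) (hb0 : ∀ v, 0 ≤ b v) : ∀ α ∈ afd cost b p, 0 ≤ α := by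
  intro α hα
  by_contra hneg
  push_neg at hneg
  rw [mem_afd] at hα
  have : ∑ v ∈ Appr p, min (b v) α = 5 * α := by
    rw [Finset.sum_congr rfl fun v _ => min_eq_right (le_of_lt (lt_of_lt_of_le hneg (hb0 v)))]
    rw [Finset.sum_const, Dcard]; push_cast; ring
  rw [this] at hα
  nlinarith

lemma alf_nonneg {cost : Fin 4 → ℝ} {b : Fin 16 → ℝ} {p : Fin 4}
    (hc0 : 0 ≤ cost p) (hb0 : ∀ v, 0 ≤ b v) : 0 ≤ alf cost b p :=
  Real.sInf_nonneg (afd_subset_nonneg hc0 hb0)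

/-- g1d : exact computation of the affordability coefficient -/
lemma alf_eq {cost : Fin 4 → ℝ} {b : Fin 16 → ℝ} {p : Fin 4} {α₀ : ℝ}
    (hsum : ∑ v ∈ Appr p, min (b v) α₀ = cost p)
    (hwit : ∃ v ∈ Appr p, α₀ ≤ b v) :
    alf cost b p = α₀ ∧ (afd cost b p).Nonempty := by
  obtain ⟨w, hw, hwb⟩ := hwit
  have hleast : IsLeast (afd cost b p) α₀ := by
    constructor
    · exact hsum
    · intro α hα
      by_contra hlt
      push_neg at hlt
      rw [mem_afd] at hα
      have : ∑ v ∈ Appr p, min (b v) α < ∑ v ∈ Appr p, min (b v) α₀ := by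
        apply Finset.sum_lt_sum
        · exact fun v _ => min_le_min le_rfl (le_of_lt hlt)
        · refine ⟨w, hw, ?_⟩
          calc min (b w) α ≤ α := min_le_right _ _
          _ < α₀ := hlt
          _ = min (b w) α₀ := (min_eq_right hwb).symm
      rw [hα, hsum] at this
      exact lt_irrefl _ this
  exact ⟨hleast.csInf_eq, ⟨α₀, hleast.1⟩⟩

/-- g1f : lower bound on the affordability coefficient -/
lemma cost_le_five_alf {cost : Fin 4 → ℝ} {b : Fin 16 → ℝ} {p : Fin 4}
    (h : (afd cost b p).Nonempty) : cost p ≤ 5 * alf cost b p := by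
  have : ∀ α ∈ afd cost b p, cost p / 5 ≤ α := by
    intro α hα
    rw [mem_afd] at hα
    have : cost p ≤ 5 * α := by
      rw [← hα]
      calc ∑ v ∈ Appr p, min (b v) α ≤ ∑ v ∈ Appr p, α :=
            Finset.sum_le_sum fun v _ => min_le_right _ _
      _ = 5 * α := by rw [Finset.sum_const, Dcard]; push_cast; ring
    linarith
  have := le_csInf h this
  have h5 : (0:ℝ) < 5 := by norm_num
  calc cost p = 5 * (cost p / 5) := by ring
  _ ≤ 5 * alf cost b p := by have := le_csInf h ‹∀ α ∈ afd cost b p, cost p / 5 ≤ α›; unfold alf; nlinarith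

/-- g1g : the affordability coefficient is itself affordable -/
lemma alf_mem {cost : Fin 4 → ℝ} {b : Fin 16 → ℝ} {p : Fin 4}
    (h : (afd cost b p).Nonempty) (hc0 : 0 ≤ cost p) (hb0 : ∀ v, 0 ≤ b v) :
    alf cost b p ∈ afd cost b p := by
  have hclosed : IsClosed (afd cost b p) := by
    have : afd cost b p = (fun α : ℝ => ∑ v ∈ Appr p, min (b v) α) ⁻¹' {cost p} := by
      ext α; simp [mem_afd, Set.mem_preimage]
    rw [this]
    exact IsClosed.preimage (afd_continuous b p) isClosed_singleton
  have hbdd : BddBelow (afd cost b p) := ⟨0, fun α hα => afd_subset_nonneg hc0 hb0 α hα⟩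
  exact hclosed.csInf_mem h hbdd

/-! ### congruence lemmas -/

lemma afd_update_ne {c : Fin 4 → ℝ} {p q : Fin 4} {x : ℝ} {b : Fin 16 → ℝ} (h : q ≠ p) :
    afd (Function.update c p x) b q = afd c b q := by
  unfold afd PB.affordSet
  simp [Function.update_of_ne h]

lemma alf_update_ne {c : Fin 4 → ℝ} {p q : Fin 4} {x : ℝ} {b : Fin 16 → ℝ} (h : q ≠ p) :
    alf (Function.update c p x) b q = alf c b q := by
  unfold alf; rw [afd_update_ne h]

lemma chg_update_ne {c : Fin 4 → ℝ} {p q : Fin 4} {x : ℝ} {b : Fin 16 → ℝ} (h : q ≠ p) :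
    chg (Function.update c p x) b q = chg c b q := by
  funext v; unfold chg; rw [alf_update_ne h]

lemma mem_afd_update_self {c : Fin 4 → ℝ} {p : Fin 4} {x α : ℝ} {b : Fin 16 → ℝ} :
    α ∈ afd (Function.update c p x) b p ↔ ∑ v ∈ Appr p, min (b v) α = x := by
  rw [mem_afd, Function.update_self]

lemma afd_congr_b {cost : Fin 4 → ℝ} {b b' : Fin 16 → ℝ} {p : Fin 4}
    (h : ∀ v ∈ Appr p, b v = b' v) : afd cost b p = afd cost b' p := by
  unfold afd PB.affordSet
  ext α
  rw [show ∀ P Q : Prop, (P ↔ Q) ↔ _ from fun _ _ => Iff.rfl]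
  constructor <;> intro hx <;> [skip; skip] <;>
    · rw [← hx]
      exact Finset.sum_congr rfl fun v hv => by rw [h v hv]

end NEP
namespace NEP
open PB Finset

/-! ### bounds preserved by charging -/

lemma chg_le {cost : Fin 4 → ℝ} {b : Fin 16 → ℝ} (q : Fin 4)
    (hc : 0 ≤ cost q) (hb0 : ∀ v, 0 ≤ b v) : ∀ v, chg cost b q v ≤ b v := by
  intro v
  unfold chg
  split
  · have h1 : 0 ≤ min (b v) (alf cost b q) := le_min (hb0 v) (alf_nonneg hc hb0)
    linarith
  · exact le_refl _

lemma chg_nonneg {cost : Fin 4 → ℝ} {b : Fin 16 → ℝ} (q : Fin 4)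
    (hc : 0 ≤ cost q) (hb0 : ∀ v, 0 ≤ b v) : ∀ v, 0 ≤ chg cost b q v := by
  intro v
  unfold chg
  split
  · have := min_le_left (b v) (alf cost b q); linarith
  · exact hb0 v

lemma chg_eq_of_not_mem {cost : Fin 4 → ℝ} {b : Fin 16 → ℝ} {q : Fin 4} {v : Fin 16}
    (h : v ∉ Appr q) : chg cost b q v = b v := by unfold chg; rw [if_neg h]

lemma chg_eq_of_mem {cost : Fin 4 → ℝ} {b : Fin 16 → ℝ} {q : Fin 4} {v : Fin 16}
    (h : v ∈ Appr q) : chg cost b q v = b v - min (b v) (alf cost b q) := by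
  unfold chg; rw [if_pos h]

/-! ### unfolding the MES recursion -/

lemma run_subset (tb : Fin 4 ↪ ℕ) (cost : Fin 4 → ℝ) :
    ∀ (R : Finset (Fin 4)) (b : Fin 16 → ℝ), run tb cost R b ⊆ R := by
  intro R
  induction R using Finset.strongInduction with
  | _ R ih =>
    intro b
    rw [run, PB.mesAux]
    split
    · next hF =>
      intro x hx
      rcases Finset.mem_insert.1 hx with h | h
      · subst h
        exact Finset.mem_of_mem_filter _ (PB.argminBy_mem _ _ _ _)
      · have hm := Finset.mem_of_mem_filter _ (PB.argminBy_mem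
          (fun p => toLex ((sInf (PB.affordSet exA19 (fun bv α _ => min bv α) cost b p), tb p) : ℝ × ℕ))
          (PB.lexKey_inj _ tb) _ hF)
        have hsub : R.erase _ ⊂ R := Finset.erase_ssubset hm
        have := ih _ hsub _ h
        exact Finset.mem_of_mem_erase this
    · intro x hx; exact absurd hx (Finset.notMem_empty x)

end NEP
namespace NEP
open PB Finset

/-- G2 : one step of the MES recursion, when we know the selected project. -/
lemma run_step (tb : Fin 4 ↪ ℕ) (cost : Fin 4 → ℝ) (R : Finset (Fin 4)) (b : Fin 16 → ℝ)
    (q : Fin 4) (hq : q ∈ R) (hqa : (afd cost b q).Nonempty)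
    (hmin : ∀ r ∈ R, r ≠ q → (afd cost b r).Nonempty → key tb cost b q ≤ key tb cost b r) :
    run tb cost R b = insert q (run tb cost (R.erase q) (chg cost b q)) := by
  have hqF : q ∈ R.filter (fun p => (PB.affordSet exA19 (fun bv α _ => min bv α) cost b p).Nonempty) :=
    Finset.mem_filter.2 ⟨hq, hqa⟩
  have hm : PB.argminBy
      (fun p => toLex ((sInf (PB.affordSet exA19 (fun bv α _ => min bv α) cost b p), tb p) : ℝ × ℕ))
      (PB.lexKey_inj _ tb) _ ⟨q, hqF⟩ = q := by
    apply argminBy_eq _ _ _ _ q hqF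
    intro r hr
    rcases Finset.mem_filter.1 hr with ⟨hr1, hr2⟩
    by_cases h : r = q
    · subst h; exact le_refl _
    · exact hmin r hr1 h hr2
  have gen : ∀ m : Fin 4, m = q →
      insert m (run tb cost (R.erase m) (chg cost b m)) =
        insert q (run tb cost (R.erase q) (chg cost b q)) := by
    rintro m rfl; rfl
  rw [run, PB.mesAux, dif_pos ⟨q, hqF⟩]
  exact gen _ hm

/-- G3' : one step of the MES recursion along a run avoiding `p`. -/
lemma run_step_not (tb : Fin 4 ↪ ℕ) (cost : Fin 4 → ℝ) (R : Finset (Fin 4)) (b : Fin 16 → ℝ)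
    (p q : Fin 4) (hp : p ∈ R) (hnp : p ∉ run tb cost R b)
    (hq : q ∈ R) (hqp : q ≠ p) (hqa : (afd cost b q).Nonempty)
    (hmin : ∀ r ∈ R, r ≠ q → r ≠ p → (afd cost b r).Nonempty →
      key tb cost b q ≤ key tb cost b r) :
    p ∉ run tb cost (R.erase q) (chg cost b q) := by
  have hqF : q ∈ R.filter (fun p => (PB.affordSet exA19 (fun bv α _ => min bv α) cost b p).Nonempty) :=
    Finset.mem_filter.2 ⟨hq, hqa⟩
  rw [run, PB.mesAux, dif_pos ⟨q, hqF⟩] at hnp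
  replace hnp : p ∉ insert (PB.argminBy
      (fun p => toLex ((sInf (PB.affordSet exA19 (fun bv α _ => min bv α) cost b p), tb p) : ℝ × ℕ))
      (PB.lexKey_inj _ tb) _ ⟨q, hqF⟩)
      (run tb cost (R.erase (PB.argminBy
        (fun p => toLex ((sInf (PB.affordSet exA19 (fun bv α _ => min bv α) cost b p), tb p) : ℝ × ℕ))
        (PB.lexKey_inj _ tb) _ ⟨q, hqF⟩))
      (chg cost b (PB.argminBy
        (fun p => toLex ((sInf (PB.affordSet exA19 (fun bv α _ => min bv α) cost b p), tb p) : ℝ × ℕ))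
        (PB.lexKey_inj _ tb) _ ⟨q, hqF⟩))) := hnp
  have hmF := PB.argminBy_mem
      (fun p => toLex ((sInf (PB.affordSet exA19 (fun bv α _ => min bv α) cost b p), tb p) : ℝ × ℕ))
      (PB.lexKey_inj _ tb) _ ⟨q, hqF⟩
  have hpm : p ≠ PB.argminBy
      (fun p => toLex ((sInf (PB.affordSet exA19 (fun bv α _ => min bv α) cost b p), tb p) : ℝ × ℕ))
      (PB.lexKey_inj _ tb) _ ⟨q, hqF⟩ := by
    intro h
    exact hnp (h ▸ Finset.mem_insert_self _ _)
  have hm : PB.argminBy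
      (fun p => toLex ((sInf (PB.affordSet exA19 (fun bv α _ => min bv α) cost b p), tb p) : ℝ × ℕ))
      (PB.lexKey_inj _ tb) _ ⟨q, hqF⟩ = q := by
    by_cases h : PB.argminBy
      (fun p => toLex ((sInf (PB.affordSet exA19 (fun bv α _ => min bv α) cost b p), tb p) : ℝ × ℕ))
      (PB.lexKey_inj _ tb) _ ⟨q, hqF⟩ = q
    · exact h
    · rcases Finset.mem_filter.1 hmF with ⟨h1, h2⟩
      have h3 := hmin _ h1 h (Ne.symm hpm) h2
      have h4 := argminBy_le
        (fun p => toLex ((sInf (PB.affordSet exA19 (fun bv α _ => min bv α) cost b p), tb p) : ℝ × ℕ))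
        (PB.lexKey_inj _ tb) _ ⟨q, hqF⟩ q hqF
      exact absurd (PB.lexKey_inj _ tb (le_antisymm h4 h3)) h
  rw [hm] at hnp
  intro hcon
  exact hnp (Finset.mem_insert_of_mem hcon)

/-- G9 : inverting one step of a complete run. -/
lemma run_eq_inv (tb : Fin 4 ↪ ℕ) (cost : Fin 4 → ℝ) (R : Finset (Fin 4)) (b : Fin 16 → ℝ)
    (hne : R.Nonempty) (hrun : run tb cost R b = R) :
    ∃ m ∈ R, (afd cost b m).Nonempty ∧
      (∀ r ∈ R, r ≠ m → (afd cost b r).Nonempty → key tb cost b m ≤ key tb cost b r) ∧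
      run tb cost (R.erase m) (chg cost b m) = R.erase m := by
  rw [run, PB.mesAux] at hrun
  by_cases hF : (R.filter (fun p => (PB.affordSet exA19 (fun bv α _ => min bv α) cost b p).Nonempty)).Nonempty
  · rw [dif_pos hF] at hrun
    replace hrun : insert (PB.argminBy
        (fun p => toLex ((sInf (PB.affordSet exA19 (fun bv α _ => min bv α) cost b p), tb p) : ℝ × ℕ))
        (PB.lexKey_inj _ tb) _ hF)
        (run tb cost (R.erase (PB.argminBy
          (fun p => toLex ((sInf (PB.affordSet exA19 (fun bv α _ => min bv α) cost b p), tb p) : ℝ × ℕ))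
          (PB.lexKey_inj _ tb) _ hF))
        (chg cost b (PB.argminBy
          (fun p => toLex ((sInf (PB.affordSet exA19 (fun bv α _ => min bv α) cost b p), tb p) : ℝ × ℕ))
          (PB.lexKey_inj _ tb) _ hF))) = R := hrun
    set m := PB.argminBy
        (fun p => toLex ((sInf (PB.affordSet exA19 (fun bv α _ => min bv α) cost b p), tb p) : ℝ × ℕ))
        (PB.lexKey_inj _ tb) _ hF with hmdef
    have hmF := PB.argminBy_mem
        (fun p => toLex ((sInf (PB.affordSet exA19 (fun bv α _ => min bv α) cost b p), tb p) : ℝ × ℕ))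
        (PB.lexKey_inj _ tb) _ hF
    rw [← hmdef] at hmF
    rcases Finset.mem_filter.1 hmF with ⟨hmR, hma⟩
    refine ⟨m, hmR, hma, ?_, ?_⟩
    · intro r hr hrm hra
      have h4 := argminBy_le
        (fun p => toLex ((sInf (PB.affordSet exA19 (fun bv α _ => min bv α) cost b p), tb p) : ℝ × ℕ))
        (PB.lexKey_inj _ tb) _ hF r (Finset.mem_filter.2 ⟨hr, hra⟩)
      rw [← hmdef] at h4
      exact h4
    · have hinner : run tb cost (R.erase m) (chg cost b m) ⊆ R.erase m := run_subset _ _ _ _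
      apply Finset.Subset.antisymm hinner
      intro x hx
      rcases Finset.mem_erase.1 hx with ⟨hxm, hxR⟩
      have hx2 : x ∈ insert m (run tb cost (R.erase m) (chg cost b m)) := by
        rw [hrun]; exact hxR
      rcases Finset.mem_insert.1 hx2 with h | h
      · exact absurd h hxm
      · exact h
  · rw [dif_neg hF] at hrun
    exact absurd hrun.symm (Finset.nonempty_iff_ne_empty.1 hne)

end NEP
namespace NEP
open PB Finset

/-- G4' : if `p` is never funded and no other remaining project can charge the
voters in `S`, then at the end `p`'s cost exceeds the money held by `S`. -/
lemma pool_lt (tb : Fin 4 ↪ ℕ) (cost : Fin 4 → ℝ) (β : ℝ) (hβ : 0 ≤ β)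
    (hc : ∀ q, 0 ≤ cost q) :
    ∀ (R : Finset (Fin 4)) (b : Fin 16 → ℝ), (∀ v, 0 ≤ b v) → (∀ v, b v ≤ β) →
    ∀ (p : Fin 4) (S : Finset (Fin 16)), S ⊆ Appr p → p ∈ R →
    (∀ q ∈ R, q ≠ p → ∀ v ∈ S, v ∉ Appr q) →
    p ∉ run tb cost R b → ∑ v ∈ S, b v < cost p := by
  intro R
  induction R using Finset.strongInduction with
  | _ R ih =>
    intro b hb0 hbβ p S hS hpR hfree hnp
    by_cases hF : (R.filter (fun r => (afd cost b r).Nonempty)).Nonempty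
    · -- some project gets selected; it is not p
      obtain ⟨m, hmF⟩ := hF
      -- use run_eq_inv style: select the argmin directly via run_step_not
      -- find the argmin: instead, use run_step with q := the argmin.
      -- Simpler: we don't know the argmin; use a direct unfolding.
      rcases Finset.mem_filter.1 hmF with ⟨hmR, hma⟩
      -- the selected project is the argmin; call it m', obtained from unfolding
      -- we redo the unfolding as in run_eq_inv
      rw [run, PB.mesAux] at hnp
      have hF' : (R.filter (fun p => (PB.affordSet exA19 (fun bv α _ => min bv α) cost b p).Nonempty)).Nonempty :=
        ⟨m, hmF⟩
      rw [dif_pos hF'] at hnp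
      replace hnp : p ∉ insert (PB.argminBy
          (fun p => toLex ((sInf (PB.affordSet exA19 (fun bv α _ => min bv α) cost b p), tb p) : ℝ × ℕ))
          (PB.lexKey_inj _ tb) _ hF')
          (run tb cost (R.erase (PB.argminBy
            (fun p => toLex ((sInf (PB.affordSet exA19 (fun bv α _ => min bv α) cost b p), tb p) : ℝ × ℕ))
            (PB.lexKey_inj _ tb) _ hF'))
          (chg cost b (PB.argminBy
            (fun p => toLex ((sInf (PB.affordSet exA19 (fun bv α _ => min bv α) cost b p), tb p) : ℝ × ℕ))
            (PB.lexKey_inj _ tb) _ hF'))) := hnp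
      set m' := PB.argminBy
          (fun p => toLex ((sInf (PB.affordSet exA19 (fun bv α _ => min bv α) cost b p), tb p) : ℝ × ℕ))
          (PB.lexKey_inj _ tb) _ hF' with hmdef
      have hm'F := PB.argminBy_mem
          (fun p => toLex ((sInf (PB.affordSet exA19 (fun bv α _ => min bv α) cost b p), tb p) : ℝ × ℕ))
          (PB.lexKey_inj _ tb) _ hF'
      rw [← hmdef] at hm'F
      rcases Finset.mem_filter.1 hm'F with ⟨hm'R, _⟩
      have hpm' : p ≠ m' := fun h => hnp (h ▸ Finset.mem_insert_self _ _)
      have hnp2 : p ∉ run tb cost (R.erase m') (chg cost b m') :=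
        fun h => hnp (Finset.mem_insert_of_mem h)
      have hsub : R.erase m' ⊂ R := Finset.erase_ssubset hm'R
      have hres := ih _ hsub (chg cost b m') (chg_nonneg m' (hc m') hb0)
        (fun v => le_trans (chg_le m' (hc m') hb0 v) (hbβ v)) p S hS
        (Finset.mem_erase.2 ⟨hpm', hpR⟩)
        (fun q hq hqp v hv => hfree q (Finset.mem_of_mem_erase hq) hqp v hv) hnp2
      have hSeq : ∑ v ∈ S, chg cost b m' v = ∑ v ∈ S, b v := by
        apply Finset.sum_congr rfl
        intro v hv
        exact chg_eq_of_not_mem (hfree m' hm'R (Ne.symm hpm') v hv)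
      rw [hSeq] at hres
      exact hres
    · -- nothing affordable : p itself is unaffordable
      have hpa : ¬ (afd cost b p).Nonempty := by
        intro h
        exact hF ⟨p, Finset.mem_filter.2 ⟨hpR, h⟩⟩
      by_contra hcon
      push_neg at hcon
      apply hpa
      apply afd_nonempty hβ (hc p) hb0 hbβ
      calc cost p ≤ ∑ v ∈ S, b v := hcon
      _ ≤ ∑ v ∈ Appr p, b v := Finset.sum_le_sum_of_subset_of_nonneg hS (fun v _ _ => hb0 v)

end NEP
namespace NEP
open PB Finset

/-! ### the combinatorial structure of the example -/

/-- the two projects `p` and `q` share a voter -/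
def adj (p q : Fin 4) : Prop := p ≠ q ∧ ¬ Disjoint (Appr p) (Appr q)

instance : DecidablePred (fun x : Fin 4 × Fin 4 => adj x.1 x.2) := fun x => by
  unfold adj; infer_instance

instance (p q : Fin 4) : Decidable (adj p q) := by unfold adj; infer_instance

/-- the shared voter of two adjacent projects -/
def sh (p q : Fin 4) : Fin 16 :=
  if (p = 0 ∧ q = 1) ∨ (p = 1 ∧ q = 0) then 0
  else if (p = 0 ∧ q = 2) ∨ (p = 2 ∧ q = 0) then 4
  else if (p = 2 ∧ q = 3) ∨ (p = 3 ∧ q = 2) then 8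
  else 12

/-- the three voters approving only `p` -/
def exv (p : Fin 4) : Finset (Fin 16) :=
  if p = 0 then {1,2,3} else if p = 1 then {13,14,15} else if p = 2 then {5,6,7} else {9,10,11}

lemma Dapp (p q r : Fin 4) (h1 : adj p q) (h2 : adj p r) (hqr : q ≠ r) :
    Appr p = insert (sh p q) (insert (sh p r) (exv p)) ∧
    sh p q ∉ insert (sh p r) (exv p) ∧ sh p r ∉ exv p := by
  revert h1 h2 hqr; revert p q r; decide

lemma Dmem (p q t : Fin 4) (h : adj p q) : sh p q ∈ Appr t ↔ (t = p ∨ t = q) := by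
  revert h; revert p q t; decide

lemma Dexv (p t : Fin 4) (v : Fin 16) (hv : v ∈ exv p) : v ∈ Appr t ↔ t = p := by
  revert hv; revert p t v; decide

lemma Dexcard : ∀ p : Fin 4, (exv p).card = 3 := by decide

lemma Dexsub : ∀ p : Fin 4, exv p ⊆ Appr p := by decide

lemma Ddisj (p q : Fin 4) (h : ¬ adj p q) (hne : p ≠ q) :
    ∀ v ∈ Appr p, v ∉ Appr q := by
  revert h hne; revert p q; decide

lemma Dsym (p q : Fin 4) (h : adj p q) : adj q p := by revert h; revert p q; decide

lemma Dshsym (p q : Fin 4) : sh p q = sh q p := by revert p q; decide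

lemma Dpat1 (a b c d : Fin 4) (h1 : a ≠ b) (h2 : a ≠ c) (h3 : a ≠ d) (h4 : b ≠ c)
    (h5 : b ≠ d) (h6 : c ≠ d) (h : ¬ adj a b) :
    adj a c ∧ adj a d ∧ adj b c ∧ adj b d ∧ ¬ adj c d := by
  revert h1 h2 h3 h4 h5 h6 h; revert a b c d; decide

lemma Dpat2a (a b c d : Fin 4) (h1 : a ≠ b) (h2 : a ≠ c) (h3 : a ≠ d) (h4 : b ≠ c)
    (h5 : b ≠ d) (h6 : c ≠ d) (h : adj a b) (h' : ¬ adj a d) :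
    adj a c ∧ adj b d ∧ adj c d ∧ ¬ adj b c := by
  revert h1 h2 h3 h4 h5 h6 h h'; revert a b c d; decide

lemma Dpat2b (a b c d : Fin 4) (h1 : a ≠ b) (h2 : a ≠ c) (h3 : a ≠ d) (h4 : b ≠ c)
    (h5 : b ≠ d) (h6 : c ≠ d) (h : adj a b) (h' : adj a d) :
    ¬ adj a c ∧ adj b c ∧ adj c d ∧ ¬ adj b d := by
  revert h1 h2 h3 h4 h5 h6 h h'; revert a b c d; decide

lemma Derase3 (a b c d : Fin 4) (h1 : a ≠ b) (h2 : a ≠ c) (h3 : a ≠ d) (h4 : b ≠ c)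
    (h5 : b ≠ d) (h6 : c ≠ d) :
    ((Finset.univ.erase a).erase b).erase c = {d} := by
  revert h1 h2 h3 h4 h5 h6; revert a b c d; decide

lemma Derase2 (a b c d : Fin 4) (h1 : a ≠ b) (h2 : a ≠ c) (h3 : a ≠ d) (h4 : b ≠ c)
    (h5 : b ≠ d) (h6 : c ≠ d) :
    (Finset.univ.erase a).erase b = {c, d} := by
  revert h1 h2 h3 h4 h5 h6; revert a b c d; decide

/-- sums over the approver set of a project with two given neighbours -/
lemma sum_appr (p q r : Fin 4) (h1 : adj p q) (h2 : adj p r) (hqr : q ≠ r) (f : Fin 16 → ℝ) :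
    ∑ v ∈ Appr p, f v = f (sh p q) + f (sh p r) + ∑ v ∈ exv p, f v := by
  obtain ⟨he, h3, h4⟩ := Dapp p q r h1 h2 hqr
  rw [he, Finset.sum_insert h3, Finset.sum_insert h4]
  ring

lemma sum_exv (p : Fin 4) (f : Fin 16 → ℝ) (t : ℝ) (h : ∀ v ∈ exv p, f v = t) :
    ∑ v ∈ exv p, f v = 3 * t := by
  rw [Finset.sum_congr rfl h, Finset.sum_const, Dexcard]
  push_cast
  ring

end NEP
namespace NEP
open PB Finset

lemma DneR1 : ∀ a : Fin 4, (Finset.univ.erase a).Nonempty := by decide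
lemma DneR2 : ∀ a b : Fin 4, a ≠ b → ((Finset.univ.erase a).erase b).Nonempty := by decide
lemma DneR3 : ∀ a b c : Fin 4, a ≠ b → a ≠ c → b ≠ c →
    (((Finset.univ.erase a).erase b).erase c).Nonempty := by decide
lemma Dall (a b c d r : Fin 4) (h1 : a ≠ b) (h2 : a ≠ c) (h3 : a ≠ d) (h4 : b ≠ c)
    (h5 : b ≠ d) (h6 : c ≠ d) : r = a ∨ r = b ∨ r = c ∨ r = d := by
  revert h1 h2 h3 h4 h5 h6; revert a b c d r; decide

lemma pool_le (p : Fin 4) (b : Fin 16 → ℝ) {β : ℝ} (hbβ : ∀ v, b v ≤ β) :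
    ∑ v ∈ Appr p, b v ≤ 5 * β := by
  calc ∑ v ∈ Appr p, b v ≤ ∑ _v ∈ Appr p, β := Finset.sum_le_sum fun v _ => hbβ v
  _ = 5 * β := by rw [Finset.sum_const, Dcard]; push_cast; ring

lemma alf_const (cost : Fin 4 → ℝ) (b : Fin 16 → ℝ) (p : Fin 4) {β : ℝ}
    (hb : ∀ v ∈ Appr p, b v = β) (h5 : cost p ≤ 5 * β) :
    alf cost b p = cost p / 5 ∧ (afd cost b p).Nonempty := by
  apply alf_eq
  · rw [Finset.sum_congr rfl (fun v hv => by rw [hb v hv, min_eq_right (by linarith)])]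
    rw [Finset.sum_const, Dcard]; push_cast; ring
  · obtain ⟨v, hv⟩ := Dne p
    exact ⟨v, hv, by rw [hb v hv]; linarith⟩

lemma key_update_ne (tb : Fin 4 ↪ ℕ) {c : Fin 4 → ℝ} {p q : Fin 4} {x : ℝ} {b : Fin 16 → ℝ}
    (h : q ≠ p) : key tb (Function.update c p x) b q = key tb c b q := by
  unfold key; rw [alf_update_ne h]

lemma key_congr_b (tb : Fin 4 ↪ ℕ) {cost : Fin 4 → ℝ} {b b' : Fin 16 → ℝ} {q : Fin 4}
    (h : ∀ v ∈ Appr q, b v = b' v) : key tb cost b q = key tb cost b' q := by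
  unfold key alf; rw [afd_congr_b h]

lemma key_of_lt (tb : Fin 4 ↪ ℕ) {cost cost' : Fin 4 → ℝ} {b b' : Fin 16 → ℝ} {q r : Fin 4}
    (h : alf cost b q < alf cost' b' r) : key tb cost b q ≤ key tb cost' b' r :=
  le_of_lt (Prod.Lex.toLex_lt_toLex.2 (Or.inl h))

lemma key_fst (tb : Fin 4 ↪ ℕ) {cost cost' : Fin 4 → ℝ} {b b' : Fin 16 → ℝ} {q r : Fin 4}
    (h : key tb cost b q ≤ key tb cost' b' r) : alf cost b q ≤ alf cost' b' r := by
  rcases Prod.Lex.toLex_le_toLex.1 h with h | ⟨h1, _⟩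
  · exact le_of_lt h
  · exact le_of_eq h1

lemma key_snd (tb : Fin 4 ↪ ℕ) {cost cost' : Fin 4 → ℝ} {b b' : Fin 16 → ℝ} {q r : Fin 4}
    (h : key tb cost b q ≤ key tb cost' b' r) (heq : alf cost b q = alf cost' b' r) :
    tb q ≤ tb r := by
  rcases Prod.Lex.toLex_le_toLex.1 h with h | ⟨_, h2⟩
  · exact absurd (show alf cost b q < alf cost' b' r from h) (by rw [heq]; exact lt_irrefl _)
  · exact h2

lemma key_of_eq (tb : Fin 4 ↪ ℕ) {cost cost' : Fin 4 → ℝ} {b b' : Fin 16 → ℝ} {q r : Fin 4}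
    (heq : alf cost b q = alf cost' b' r) (h2 : tb q ≤ tb r) :
    key tb cost b q ≤ key tb cost' b' r :=
  Prod.Lex.toLex_le_toLex.2 (Or.inr ⟨heq, h2⟩)

lemma update_nonneg {c : Fin 4 → ℝ} (hc0 : ∀ q, 0 ≤ c q) {p : Fin 4} {x : ℝ} (hx : 0 ≤ x) :
    ∀ q, 0 ≤ Function.update c p x q := by
  intro q
  by_cases h : q = p
  · subst h; rw [Function.update_self]; exact hx
  · rw [Function.update_of_ne h]; exact hc0 q

end NEP
namespace NEP
lemma Dexne : ∀ p : Fin 4, (exv p).Nonempty := by decide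
end NEP

set_option maxHeartbeats 2000000 in
/-- For every budget `B > 0` and every tie-breaking order, the
four-project, sixteen-voter game with zero delivery costs has no MES-Apr-Nash
equilibrium. -/
theorem mesApr_no_NE_example_four_projects (B : ℝ) (hB : 0 < B) (tb : Fin 4 ↪ ℕ) :
    ¬ ∃ c : Fin 4 → ℝ, PB.isNE (PB.mesApr exA19 tb B) (fun _ => 0) c := by
  rintro ⟨c, hc0, hdev⟩
  set β := B / 16 with hβdef
  have hβ : 0 < β := by rw [hβdef]; linarith
  set b0 : Fin 16 → ℝ := fun _ => β with hb0def
  have hb00 : ∀ v, 0 ≤ b0 v := fun v => le_of_lt hβ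
  have hb0β : ∀ v, b0 v ≤ β := fun v => le_refl β
  have hmes : ∀ cost : Fin 4 → ℝ,
      PB.mesApr exA19 tb B cost = NEP.run tb cost Finset.univ b0 := by
    intro cost
    have h : (fun _ : Fin 16 => B / (Fintype.card (Fin 16) : ℝ)) = b0 := by
      funext v
      rw [hb0def, hβdef]
      norm_num [Fintype.card_fin]
    unfold PB.mesApr NEP.run
    rw [h]
  have hpay : ∀ (cost : Fin 4 → ℝ) (p : Fin 4),
      PB.payoff (fun _ => 0) cost (PB.mesApr exA19 tb B cost) p
        = if p ∈ NEP.run tb cost Finset.univ b0 then cost p else 0 := by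
    intro cost p
    rw [hmes]
    unfold PB.payoff
    split
    · ring
    · rfl
  have hfunded : ∀ p, p ∈ NEP.run tb c Finset.univ b0 ∧ 3 * β ≤ c p := by
    intro p
    have h3 : (0:ℝ) ≤ 3 * β := by linarith
    have hdev3 := hdev p (3 * β) h3
    rw [hpay, hpay] at hdev3
    have hc'0 : ∀ q, 0 ≤ Function.update c p (3*β) q := NEP.update_nonneg hc0 h3
    have hfun : p ∈ NEP.run tb (Function.update c p (3*β)) Finset.univ b0 := by
      by_contra hnp
      have hlt := NEP.pool_lt tb _ β (le_of_lt hβ) hc'0 Finset.univ b0 hb00 hb0β p (NEP.exv p)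
        (NEP.Dexsub p) (Finset.mem_univ p)
        (fun q _ hqp v hv => fun hmem => hqp ((NEP.Dexv p q v hv).1 hmem)) hnp
      rw [Function.update_self] at hlt
      rw [NEP.sum_exv p _ β (fun v _ => rfl)] at hlt
      linarith
    rw [if_pos hfun, Function.update_self] at hdev3
    by_cases h : p ∈ NEP.run tb c Finset.univ b0
    · rw [if_pos h] at hdev3; exact ⟨h, hdev3⟩
    · rw [if_neg h] at hdev3; linarith
  have hWuniv : NEP.run tb c Finset.univ b0 = Finset.univ :=
    Finset.eq_univ_iff_forall.2 fun p => (hfunded p).1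
  have hc3β : ∀ p, 3 * β ≤ c p := fun p => (hfunded p).2
  have hDevle : ∀ (p : Fin 4) (x : ℝ), 0 ≤ x →
      p ∈ NEP.run tb (Function.update c p x) Finset.univ b0 → x ≤ c p := by
    intro p x hx hmem
    have h := hdev p x hx
    rw [hpay, hpay, if_pos hmem, Function.update_self, if_pos (hfunded p).1] at h
    exact h
  -- unfold the equilibrium run
  obtain ⟨q1, hq1R, hq1a, hkey1, hrun1⟩ := NEP.run_eq_inv tb c Finset.univ b0
    ⟨0, Finset.mem_univ 0⟩ hWuniv
  obtain ⟨q2, hq2R, hq2a, hkey2, hrun2⟩ := NEP.run_eq_inv tb c _ _ (NEP.DneR1 q1) hrun1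
  have hq21 : q2 ≠ q1 := (Finset.mem_erase.1 hq2R).1
  obtain ⟨q3, hq3R, hq3a, hkey3, hrun3⟩ := NEP.run_eq_inv tb c _ _
    (NEP.DneR2 q1 q2 (Ne.symm hq21)) hrun2
  have hq32 : q3 ≠ q2 := (Finset.mem_erase.1 hq3R).1
  have hq31 : q3 ≠ q1 := (Finset.mem_erase.1 (Finset.mem_erase.1 hq3R).2).1
  obtain ⟨q4, hq4R, hq4a, hkey4, hrun4⟩ := NEP.run_eq_inv tb c _ _
    (NEP.DneR3 q1 q2 q3 (Ne.symm hq21) (Ne.symm hq31) (Ne.symm hq32)) hrun3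
  have hq43 : q4 ≠ q3 := (Finset.mem_erase.1 hq4R).1
  have hq42 : q4 ≠ q2 := (Finset.mem_erase.1 (Finset.mem_erase.1 hq4R).2).1
  have hq41 : q4 ≠ q1 :=
    (Finset.mem_erase.1 (Finset.mem_erase.1 (Finset.mem_erase.1 hq4R).2).2).1
  set b1 := NEP.chg c b0 q1 with hb1def
  have hb10 : ∀ v, 0 ≤ b1 v := NEP.chg_nonneg q1 (hc0 q1) hb00
  have hb1le : ∀ v, b1 v ≤ b0 v := NEP.chg_le q1 (hc0 q1) hb00
  have hb1β : ∀ v, b1 v ≤ β := fun v => le_trans (hb1le v) (hb0β v)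
  set b2 := NEP.chg c b1 q2 with hb2def
  have hb20 : ∀ v, 0 ≤ b2 v := NEP.chg_nonneg q2 (hc0 q2) hb10
  have hb2le : ∀ v, b2 v ≤ b1 v := NEP.chg_le q2 (hc0 q2) hb10
  have hb2β : ∀ v, b2 v ≤ β := fun v => le_trans (hb2le v) (hb1β v)
  set b3 := NEP.chg c b2 q3 with hb3def
  have hb30 : ∀ v, 0 ≤ b3 v := NEP.chg_nonneg q3 (hc0 q3) hb20
  have hb3le : ∀ v, b3 v ≤ b2 v := NEP.chg_le q3 (hc0 q3) hb20
  have hb3β : ∀ v, b3 v ≤ β := fun v => le_trans (hb3le v) (hb2β v)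
  have hcq1le : c q1 ≤ 5 * β := le_trans (NEP.cost_le_pool hq1a) (NEP.pool_le q1 b0 hb0β)
  have hcq2le : c q2 ≤ 5 * β := le_trans (NEP.cost_le_pool hq2a) (NEP.pool_le q2 b1 hb1β)
  have hcq3le : c q3 ≤ 5 * β := le_trans (NEP.cost_le_pool hq3a) (NEP.pool_le q3 b2 hb2β)
  have hcq4le : c q4 ≤ 5 * β := le_trans (NEP.cost_le_pool hq4a) (NEP.pool_le q4 b3 hb3β)
  have hcle : ∀ r, c r ≤ 5 * β := by
    intro r
    rcases NEP.Dall q1 q2 q3 q4 r (Ne.symm hq21) (Ne.symm hq31) (Ne.symm hq41) (Ne.symm hq32)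
      (Ne.symm hq42) (Ne.symm hq43) with h | h | h | h <;> subst h <;> assumption
  obtain ⟨hu, -⟩ := NEP.alf_const c b0 q1 (fun v _ => rfl) hcq1le
  have halfne0 : ∀ r, (NEP.afd c b0 r).Nonempty ∧ NEP.alf c b0 r = c r / 5 := by
    intro r
    obtain ⟨h1, h2⟩ := NEP.alf_const c b0 r (fun v _ => rfl) (hcle r)
    exact ⟨h2, h1⟩
  have hcmp1 : ∀ r, r ≠ q1 → c q1 ≤ c r := by
    intro r hr
    have h := hkey1 r (Finset.mem_univ r) hr (halfne0 r).1
    have h2 := NEP.key_fst tb h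
    rw [hu, (halfne0 r).2] at h2
    linarith
  by_cases hadj12 : NEP.adj q1 q2
  · by_cases hadj14 : NEP.adj q1 q4
    ·
      -- CASE 2b : q1 ~ q2, q1 ~ q4, q2 ~ q3, q3 ~ q4
      obtain ⟨hn13, h23, h34, hn24⟩ := NEP.Dpat2b q1 q2 q3 q4 (Ne.symm hq21) (Ne.symm hq31)
        (Ne.symm hq41) (Ne.symm hq32) (Ne.symm hq42) (Ne.symm hq43) hadj12 hadj14
      set s12 := NEP.sh q1 q2 with hs12def
      set s14 := NEP.sh q1 q4 with hs14def
      set s23 := NEP.sh q2 q3 with hs23def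
      set s34 := NEP.sh q3 q4 with hs34def
      have m12_1 : s12 ∈ NEP.Appr q1 := (NEP.Dmem q1 q2 q1 hadj12).2 (Or.inl rfl)
      have m12_2 : s12 ∈ NEP.Appr q2 := (NEP.Dmem q1 q2 q2 hadj12).2 (Or.inr rfl)
      have n12_3 : s12 ∉ NEP.Appr q3 := fun h => by
        rcases (NEP.Dmem q1 q2 q3 hadj12).1 h with h' | h'
        exacts [hq31 h', hq32 h']
      have n12_4 : s12 ∉ NEP.Appr q4 := fun h => by
        rcases (NEP.Dmem q1 q2 q4 hadj12).1 h with h' | h'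
        exacts [hq41 h', hq42 h']
      have m14_1 : s14 ∈ NEP.Appr q1 := (NEP.Dmem q1 q4 q1 hadj14).2 (Or.inl rfl)
      have m14_4 : s14 ∈ NEP.Appr q4 := (NEP.Dmem q1 q4 q4 hadj14).2 (Or.inr rfl)
      have n14_2 : s14 ∉ NEP.Appr q2 := fun h => by
        rcases (NEP.Dmem q1 q4 q2 hadj14).1 h with h' | h'
        exacts [hq21 h', Ne.symm hq42 h']
      have n14_3 : s14 ∉ NEP.Appr q3 := fun h => by
        rcases (NEP.Dmem q1 q4 q3 hadj14).1 h with h' | h'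
        exacts [hq31 h', Ne.symm hq43 h']
      have m23_2 : s23 ∈ NEP.Appr q2 := (NEP.Dmem q2 q3 q2 h23).2 (Or.inl rfl)
      have m23_3 : s23 ∈ NEP.Appr q3 := (NEP.Dmem q2 q3 q3 h23).2 (Or.inr rfl)
      have n23_1 : s23 ∉ NEP.Appr q1 := fun h => by
        rcases (NEP.Dmem q2 q3 q1 h23).1 h with h' | h'
        exacts [Ne.symm hq21 h', Ne.symm hq31 h']
      have n23_4 : s23 ∉ NEP.Appr q4 := fun h => by
        rcases (NEP.Dmem q2 q3 q4 h23).1 h with h' | h'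
        exacts [hq42 h', hq43 h']
      have m34_3 : s34 ∈ NEP.Appr q3 := (NEP.Dmem q3 q4 q3 h34).2 (Or.inl rfl)
      have m34_4 : s34 ∈ NEP.Appr q4 := (NEP.Dmem q3 q4 q4 h34).2 (Or.inr rfl)
      have n34_1 : s34 ∉ NEP.Appr q1 := fun h => by
        rcases (NEP.Dmem q3 q4 q1 h34).1 h with h' | h'
        exacts [Ne.symm hq31 h', Ne.symm hq41 h']
      have n34_2 : s34 ∉ NEP.Appr q2 := fun h => by
        rcases (NEP.Dmem q3 q4 q2 h34).1 h with h' | h'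
        exacts [Ne.symm hq32 h', Ne.symm hq42 h']
      have hsum2 : ∀ f : Fin 16 → ℝ,
          ∑ v ∈ NEP.Appr q2, f v = f s12 + f s23 + ∑ v ∈ NEP.exv q2, f v := fun f => by
        rw [NEP.sum_appr q2 q1 q3 (NEP.Dsym _ _ hadj12) h23 (Ne.symm hq31) f,
          NEP.Dshsym q2 q1]
      have hsum3 : ∀ f : Fin 16 → ℝ,
          ∑ v ∈ NEP.Appr q3, f v = f s23 + f s34 + ∑ v ∈ NEP.exv q3, f v := fun f => by
        rw [NEP.sum_appr q3 q2 q4 (NEP.Dsym _ _ h23) h34 (Ne.symm hq42) f,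
          NEP.Dshsym q3 q2]
      have hsum4 : ∀ f : Fin 16 → ℝ,
          ∑ v ∈ NEP.Appr q4, f v = f s14 + f s34 + ∑ v ∈ NEP.exv q4, f v := fun f => by
        rw [NEP.sum_appr q4 q1 q3 (NEP.Dsym _ _ hadj14) (NEP.Dsym _ _ h34) (Ne.symm hq31) f,
          NEP.Dshsym q4 q1, NEP.Dshsym q4 q3]
      -- money after step 1
      have hb1v : ∀ v, b1 v = if v ∈ NEP.Appr q1 then β - c q1 / 5 else β := by
        intro v
        rw [hb1def]
        unfold NEP.chg
        rw [hu]
        split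
        · show β - min β (c q1 / 5) = _
          rw [min_eq_right (by linarith)]
        · rfl
      have hb1s12 : b1 s12 = β - c q1 / 5 := by rw [hb1v s12, if_pos m12_1]
      have hb1s14 : b1 s14 = β - c q1 / 5 := by rw [hb1v s14, if_pos m14_1]
      have hb1s23 : b1 s23 = β := by rw [hb1v s23, if_neg n23_1]
      have hb1s34 : b1 s34 = β := by rw [hb1v s34, if_neg n34_1]
      have hb1ex : ∀ p', p' ≠ q1 → ∀ v ∈ NEP.exv p', b1 v = β := by
        intro p' hp' v hv
        rw [hb1v v, if_neg (fun h => hp' ((NEP.Dexv p' q1 v hv).1 h).symm)]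
      -- the coefficient of q2 at step 2
      set α2 := NEP.alf c b1 q2 with hα2def
      set m2 := min β α2 with hm2def
      have hα2_0 : 0 ≤ α2 := NEP.alf_nonneg (hc0 q2) hb10
      have hα2five : c q2 ≤ 5 * α2 := NEP.cost_le_five_alf hq2a
      have hm2β : m2 ≤ β := min_le_left _ _
      have hm2α : m2 ≤ α2 := min_le_right _ _
      have hm2ge : c q2 / 5 ≤ m2 := le_min (by linarith) (by linarith)
      have hm2_0 : 0 ≤ m2 := le_min (le_of_lt hβ) hα2_0
      have hC2eq : min (β - c q1 / 5) α2 + 4 * m2 = c q2 := by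
        have h := NEP.alf_mem hq2a (hc0 q2) hb10
        rw [NEP.mem_afd, hsum2 (fun v => min (b1 v) α2), hb1s12, hb1s23,
          NEP.sum_exv q2 _ m2 (fun v hv => by rw [hb1ex q2 hq21 v hv])] at h
        linarith [h]
      -- money after step 2
      have hb2v : ∀ v, b2 v = if v ∈ NEP.Appr q2 then b1 v - min (b1 v) α2 else b1 v := by
        intro v
        rw [hb2def]
        rfl
      have hb2s23 : b2 s23 = β - m2 := by rw [hb2v s23, if_pos m23_2, hb1s23]
      have hb2s14 : b2 s14 = β - c q1 / 5 := by rw [hb2v s14, if_neg n14_2, hb1s14]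
      have hb2s34 : b2 s34 = β := by rw [hb2v s34, if_neg n34_2, hb1s34]
      have hb2ex : ∀ p', p' ≠ q1 → p' ≠ q2 → ∀ v ∈ NEP.exv p', b2 v = β := by
        intro p' hp1 hp2 v hv
        rw [hb2v v, if_neg (fun h => hp2 ((NEP.Dexv p' q2 v hv).1 h).symm)]
        exact hb1ex p' hp1 v hv
      -- the coefficient of q3 at step 3
      set α3 := NEP.alf c b2 q3 with hα3def
      set m3 := min β α3 with hm3def
      have hα3_0 : 0 ≤ α3 := NEP.alf_nonneg (hc0 q3) hb20
      have hα3five : c q3 ≤ 5 * α3 := NEP.cost_le_five_alf hq3a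
      have hm3β : m3 ≤ β := min_le_left _ _
      have hm3α : m3 ≤ α3 := min_le_right _ _
      have hm3ge : c q3 / 5 ≤ m3 := le_min (by linarith) (by linarith)
      have hm3_0 : 0 ≤ m3 := le_min (le_of_lt hβ) hα3_0
      have hC3eq : min (β - m2) α3 + 4 * m3 = c q3 := by
        have h := NEP.alf_mem hq3a (hc0 q3) hb20
        rw [NEP.mem_afd, hsum3 (fun v => min (b2 v) α3), hb2s23, hb2s34,
          NEP.sum_exv q3 _ m3 (fun v hv => by rw [hb2ex q3 hq31 hq32 v hv])] at h
        linarith [h]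
      -- money after step 3
      have hb3v : ∀ v, b3 v = if v ∈ NEP.Appr q3 then b2 v - min (b2 v) α3 else b2 v := by
        intro v
        rw [hb3def]
        rfl
      have hb3s14 : b3 s14 = β - c q1 / 5 := by rw [hb3v s14, if_neg n14_3, hb2s14]
      have hb3s34 : b3 s34 = β - m3 := by rw [hb3v s34, if_pos m34_3, hb2s34]
      have hb3ex4 : ∀ v ∈ NEP.exv q4, b3 v = β := by
        intro v hv
        rw [hb3v v, if_neg (fun h => hq43 ((NEP.Dexv q4 q3 v hv).1 h).symm)]
        exact hb2ex q4 hq41 hq42 v hv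
      have hpool4 : ∑ v ∈ NEP.Appr q4, b3 v = 5 * β - c q1 / 5 - m3 := by
        rw [hsum4 b3, hb3s14, hb3s34, NEP.sum_exv q4 b3 β hb3ex4]
        ring
      -- ===== drain of q4 =====
      have hM4le : 5 * β - c q1 / 5 - m3 ≤ c q4 := by
        have hx0 : (0:ℝ) ≤ 5 * β - c q1 / 5 - m3 := by linarith [hcq1le]
        apply hDevle q4 _ hx0
        by_contra hnp
        have hstep1 := NEP.run_step_not tb (Function.update c q4 (5 * β - c q1 / 5 - m3))
          Finset.univ b0 q4 q1 (Finset.mem_univ q4) hnp (Finset.mem_univ q1) (Ne.symm hq41)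
          (by rw [NEP.afd_update_ne (Ne.symm hq41)]; exact hq1a)
          (by
            intro r _ hr1 hr4 hra
            rw [NEP.afd_update_ne hr4] at hra
            rw [NEP.key_update_ne tb (Ne.symm hq41), NEP.key_update_ne tb hr4]
            exact hkey1 r (Finset.mem_univ r) hr1 hra)
        rw [NEP.chg_update_ne (Ne.symm hq41), ← hb1def] at hstep1
        have hstep2 := NEP.run_step_not tb (Function.update c q4 (5 * β - c q1 / 5 - m3))
          _ b1 q4 q2 (Finset.mem_erase.2 ⟨hq41, Finset.mem_univ q4⟩) hstep1
          (Finset.mem_erase.2 ⟨hq21, Finset.mem_univ q2⟩) (Ne.symm hq42)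
          (by rw [NEP.afd_update_ne (Ne.symm hq42)]; exact hq2a)
          (by
            intro r hrR hr2 hr4 hra
            rw [NEP.afd_update_ne hr4] at hra
            rw [NEP.key_update_ne tb (Ne.symm hq42), NEP.key_update_ne tb hr4]
            exact hkey2 r hrR hr2 hra)
        rw [NEP.chg_update_ne (Ne.symm hq42), ← hb2def] at hstep2
        have hstep3 := NEP.run_step_not tb (Function.update c q4 (5 * β - c q1 / 5 - m3))
          _ b2 q4 q3 (Finset.mem_erase.2 ⟨hq42, Finset.mem_erase.2 ⟨hq41, Finset.mem_univ q4⟩⟩)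
          hstep2
          (Finset.mem_erase.2 ⟨hq32, Finset.mem_erase.2 ⟨hq31, Finset.mem_univ q3⟩⟩)
          (Ne.symm hq43)
          (by rw [NEP.afd_update_ne (Ne.symm hq43)]; exact hq3a)
          (by
            intro r hrR hr3 hr4 hra
            rcases NEP.Dall q1 q2 q3 q4 r (Ne.symm hq21) (Ne.symm hq31) (Ne.symm hq41)
              (Ne.symm hq32) (Ne.symm hq42) (Ne.symm hq43) with h | h | h | h
            · exact absurd h (Finset.mem_erase.1 (Finset.mem_erase.1 hrR).2).1
            · exact absurd h (Finset.mem_erase.1 hrR).1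
            · exact absurd h hr3
            · exact absurd h hr4)
        rw [NEP.chg_update_ne (Ne.symm hq43), ← hb3def] at hstep3
        have hfree : ∀ q ∈ ((Finset.univ.erase q1).erase q2).erase q3, q ≠ q4 →
            ∀ v ∈ NEP.Appr q4, v ∉ NEP.Appr q := by
          intro q hq hqp v hv
          rcases NEP.Dall q1 q2 q3 q4 q (Ne.symm hq21) (Ne.symm hq31) (Ne.symm hq41)
            (Ne.symm hq32) (Ne.symm hq42) (Ne.symm hq43) with h | h | h | h
          · exact absurd h (Finset.mem_erase.1 (Finset.mem_erase.1 (Finset.mem_erase.1 hq).2).2).1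
          · exact absurd h (Finset.mem_erase.1 (Finset.mem_erase.1 hq).2).1
          · exact absurd h (Finset.mem_erase.1 hq).1
          · exact absurd h hqp
        have hlt := NEP.pool_lt tb _ β (le_of_lt hβ)
          (NEP.update_nonneg hc0 hx0) _ b3 hb30 hb3β q4 (NEP.Appr q4)
          (Finset.Subset.refl _)
          (Finset.mem_erase.2 ⟨hq43, Finset.mem_erase.2 ⟨hq42,
            Finset.mem_erase.2 ⟨hq41, Finset.mem_univ q4⟩⟩⟩)
          hfree hstep3
        rw [Function.update_self, hpool4] at hlt
        exact absurd hlt (lt_irrefl _)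
      have hC4 : c q4 = 5 * β - c q1 / 5 - m3 := by
        have h := NEP.cost_le_pool hq4a
        rw [hpool4] at h
        linarith
      -- the coefficient of q4 at steps 2 and 3
      have half4b2 : NEP.alf c b2 q4 = β - m3 / 4 ∧ (NEP.afd c b2 q4).Nonempty := by
        apply NEP.alf_eq
        · rw [hsum4 (fun v => min (b2 v) (β - m3 / 4)), hb2s14, hb2s34,
            NEP.sum_exv q4 _ (β - m3 / 4)
              (fun v hv => by rw [hb2ex q4 hq41 hq42 v hv, min_eq_right (by linarith)]),
            min_eq_left (by linarith [hc3β q1]),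
            min_eq_right (by linarith), hC4]
          ring
        · obtain ⟨v, hv⟩ := NEP.Dexne q4
          refine ⟨v, NEP.Dexsub q4 hv, ?_⟩
          rw [hb2ex q4 hq41 hq42 v hv]
          linarith
      have half4b1 : NEP.alf c b1 q4 = β - m3 / 4 ∧ (NEP.afd c b1 q4).Nonempty := by
        apply NEP.alf_eq
        · rw [hsum4 (fun v => min (b1 v) (β - m3 / 4)), hb1s14, hb1s34,
            NEP.sum_exv q4 _ (β - m3 / 4)
              (fun v hv => by rw [hb1ex q4 hq41 v hv, min_eq_right (by linarith)]),
            min_eq_left (by linarith [hc3β q1]),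
            min_eq_right (by linarith), hC4]
          ring
        · obtain ⟨v, hv⟩ := NEP.Dexne q4
          refine ⟨v, NEP.Dexsub q4 hv, ?_⟩
          rw [hb1ex q4 hq41 v hv]
          linarith
      -- ===== the deviation of q3 =====
      have hM3le : 4 * β - m2 + m3 / 4 ≤ c q3 := by
        have hx0 : (0:ℝ) ≤ 4 * β - m2 + m3 / 4 := by linarith
        apply hDevle q3 _ hx0
        by_contra hnp
        have hstep1 := NEP.run_step_not tb (Function.update c q3 (4 * β - m2 + m3 / 4))
          Finset.univ b0 q3 q1 (Finset.mem_univ q3) hnp (Finset.mem_univ q1) (Ne.symm hq31)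
          (by rw [NEP.afd_update_ne (Ne.symm hq31)]; exact hq1a)
          (by
            intro r _ hr1 hr3 hra
            rw [NEP.afd_update_ne hr3] at hra
            rw [NEP.key_update_ne tb (Ne.symm hq31), NEP.key_update_ne tb hr3]
            exact hkey1 r (Finset.mem_univ r) hr1 hra)
        rw [NEP.chg_update_ne (Ne.symm hq31), ← hb1def] at hstep1
        have hstep2 := NEP.run_step_not tb (Function.update c q3 (4 * β - m2 + m3 / 4))
          _ b1 q3 q2 (Finset.mem_erase.2 ⟨hq31, Finset.mem_univ q3⟩) hstep1
          (Finset.mem_erase.2 ⟨hq21, Finset.mem_univ q2⟩) (Ne.symm hq32)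
          (by rw [NEP.afd_update_ne (Ne.symm hq32)]; exact hq2a)
          (by
            intro r hrR hr2 hr3 hra
            rw [NEP.afd_update_ne hr3] at hra
            rw [NEP.key_update_ne tb (Ne.symm hq32), NEP.key_update_ne tb hr3]
            exact hkey2 r hrR hr2 hra)
        rw [NEP.chg_update_ne (Ne.symm hq32), ← hb2def] at hstep2
        have hstep3 := NEP.run_step_not tb (Function.update c q3 (4 * β - m2 + m3 / 4))
          _ b2 q3 q4 (Finset.mem_erase.2 ⟨hq32, Finset.mem_erase.2 ⟨hq31, Finset.mem_univ q3⟩⟩)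
          hstep2
          (Finset.mem_erase.2 ⟨hq42, Finset.mem_erase.2 ⟨hq41, Finset.mem_univ q4⟩⟩) hq43
          (by rw [NEP.afd_update_ne hq43]; exact half4b2.2)
          (by
            intro r hrR hr4 hr3 hra
            rcases NEP.Dall q1 q2 q3 q4 r (Ne.symm hq21) (Ne.symm hq31) (Ne.symm hq41)
              (Ne.symm hq32) (Ne.symm hq42) (Ne.symm hq43) with h | h | h | h
            · exact absurd h (Finset.mem_erase.1 (Finset.mem_erase.1 hrR).2).1
            · exact absurd h (Finset.mem_erase.1 hrR).1
            · exact absurd h hr3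
            · exact absurd h hr4)
        rw [NEP.chg_update_ne hq43] at hstep3
        have hfree : ∀ q ∈ ((Finset.univ.erase q1).erase q2).erase q4, q ≠ q3 →
            ∀ v ∈ NEP.Appr q3, v ∉ NEP.Appr q := by
          intro q hq hqp v hv
          rcases NEP.Dall q1 q2 q3 q4 q (Ne.symm hq21) (Ne.symm hq31) (Ne.symm hq41)
            (Ne.symm hq32) (Ne.symm hq42) (Ne.symm hq43) with h | h | h | h
          · exact absurd h (Finset.mem_erase.1 (Finset.mem_erase.1 (Finset.mem_erase.1 hq).2).2).1
          · exact absurd h (Finset.mem_erase.1 (Finset.mem_erase.1 hq).2).1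
          · exact absurd h hqp
          · exact absurd h (Finset.mem_erase.1 hq).1
        have hlt := NEP.pool_lt tb _ β (le_of_lt hβ)
          (NEP.update_nonneg hc0 hx0) _ (NEP.chg c b2 q4)
          (NEP.chg_nonneg q4 (hc0 q4) hb20)
          (fun v => le_trans (NEP.chg_le q4 (hc0 q4) hb20 v) (hb2β v))
          q3 (NEP.Appr q3) (Finset.Subset.refl _)
          (Finset.mem_erase.2 ⟨Ne.symm hq43, Finset.mem_erase.2 ⟨hq32,
            Finset.mem_erase.2 ⟨hq31, Finset.mem_univ q3⟩⟩⟩)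
          hfree hstep3
        rw [Function.update_self] at hlt
        have he2s23 : NEP.chg c b2 q4 s23 = β - m2 := by
          rw [NEP.chg_eq_of_not_mem n23_4, hb2s23]
        have he2s34 : NEP.chg c b2 q4 s34 = m3 / 4 := by
          rw [NEP.chg_eq_of_mem m34_4, half4b2.1, hb2s34, min_eq_right (by linarith)]
          ring
        have he2ex : ∀ v ∈ NEP.exv q3, NEP.chg c b2 q4 v = β := by
          intro v hv
          rw [NEP.chg_eq_of_not_mem (fun h => hq43 ((NEP.Dexv q3 q4 v hv).1 h))]
          exact hb2ex q3 hq31 hq32 v hv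
        rw [hsum3 (NEP.chg c b2 q4), he2s23, he2s34, NEP.sum_exv q3 _ β he2ex] at hlt
        linarith
      have hm3_45 : 4 * β / 5 ≤ m3 := by
        have h := min_le_left (β - m2) α3
        linarith [hC3eq, hM3le]
      -- the third-step ordering condition
      have hα3le : α3 ≤ β - m3 / 4 := by
        have hk := hkey3 q4 (Finset.mem_erase.2 ⟨hq42, Finset.mem_erase.2 ⟨hq41,
          Finset.mem_univ q4⟩⟩) hq43 half4b2.2
        have h2 := NEP.key_fst tb hk
        rwa [half4b2.1] at h2
      have hm3eq : m3 = 4 * β / 5 := by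
        have : m3 ≤ 4 * β / 5 := by linarith
        linarith
      have hC3 : c q3 = 21 * β / 5 - m2 := by
        have hmin3 : min (β - m2) α3 = β - m2 := by
          apply min_eq_left
          have : β - m2 ≤ 4 * β / 5 := by linarith [hm2ge, hc3β q2]
          linarith [hm3α, hm3eq]
        rw [hmin3] at hC3eq
        rw [← hC3eq, hm3eq]
        ring
      -- q3 has a full pool at step 2
      have hApp3b1 : ∀ v ∈ NEP.Appr q3, b1 v = β := by
        intro v hv
        rw [(NEP.Dapp q3 q2 q4 (NEP.Dsym _ _ h23) h34 (Ne.symm hq42)).1] at hv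
        rcases Finset.mem_insert.1 hv with h | hv
        · rw [h, NEP.Dshsym q3 q2]; exact hb1s23
        rcases Finset.mem_insert.1 hv with h | hv
        · rw [h]; exact hb1s34
        · exact hb1ex q3 hq31 v hv
      obtain ⟨half3b1, hne3b1⟩ := NEP.alf_const c b1 q3 hApp3b1 hcq3le
      -- the second-step ordering condition
      have hα2le : α2 ≤ c q3 / 5 := by
        have hk := hkey2 q3 (Finset.mem_erase.2 ⟨hq31, Finset.mem_univ q3⟩) hq32 hne3b1
        have h2 := NEP.key_fst tb hk
        rwa [← hα2def, half3b1] at h2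
      -- ===== the deviation of q2 =====
      have hM2le : 5 * β - c q1 / 5 - c q3 / 5 ≤ c q2 := by
        have hx0 : (0:ℝ) ≤ 5 * β - c q1 / 5 - c q3 / 5 := by linarith [hcq1le, hcq3le]
        apply hDevle q2 _ hx0
        by_contra hnp
        have hstep1 := NEP.run_step_not tb
          (Function.update c q2 (5 * β - c q1 / 5 - c q3 / 5)) Finset.univ b0 q2 q1
          (Finset.mem_univ q2) hnp (Finset.mem_univ q1) (Ne.symm hq21)
          (by rw [NEP.afd_update_ne (Ne.symm hq21)]; exact hq1a)
          (by
            intro r _ hr1 hr2 hra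
            rw [NEP.afd_update_ne hr2] at hra
            rw [NEP.key_update_ne tb (Ne.symm hq21), NEP.key_update_ne tb hr2]
            exact hkey1 r (Finset.mem_univ r) hr1 hra)
        rw [NEP.chg_update_ne (Ne.symm hq21), ← hb1def] at hstep1
        have hstep2 := NEP.run_step_not tb
          (Function.update c q2 (5 * β - c q1 / 5 - c q3 / 5)) _ b1 q2 q3
          (Finset.mem_erase.2 ⟨hq21, Finset.mem_univ q2⟩) hstep1
          (Finset.mem_erase.2 ⟨hq31, Finset.mem_univ q3⟩) hq32
          (by rw [NEP.afd_update_ne hq32]; exact hne3b1)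
          (by
            intro r hrR hr3 hr2 hra
            rw [NEP.afd_update_ne hr2] at hra
            rw [NEP.key_update_ne tb hq32, NEP.key_update_ne tb hr2]
            rcases NEP.Dall q1 q2 q3 q4 r (Ne.symm hq21) (Ne.symm hq31) (Ne.symm hq41)
              (Ne.symm hq32) (Ne.symm hq42) (Ne.symm hq43) with h | h | h | h
            · exact absurd h (Finset.mem_erase.1 hrR).1
            · exact absurd h hr2
            · exact absurd h hr3
            · rw [h]
              apply NEP.key_of_lt tb
              rw [half3b1, half4b1.1]
              rw [hC3, hm3eq]
              linarith [hm2ge, hc3β q2])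
        rw [NEP.chg_update_ne hq32] at hstep2
        have hfree : ∀ q ∈ (Finset.univ.erase q1).erase q3, q ≠ q2 →
            ∀ v ∈ NEP.Appr q2, v ∉ NEP.Appr q := by
          intro q hq hqp v hv
          rcases NEP.Dall q1 q2 q3 q4 q (Ne.symm hq21) (Ne.symm hq31) (Ne.symm hq41)
            (Ne.symm hq32) (Ne.symm hq42) (Ne.symm hq43) with h | h | h | h
          · exact absurd h (Finset.mem_erase.1 (Finset.mem_erase.1 hq).2).1
          · exact absurd h hqp
          · exact absurd h (Finset.mem_erase.1 hq).1
          · rw [h]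
            exact NEP.Ddisj q2 q4 hn24 (Ne.symm hq42) v hv
        have hlt := NEP.pool_lt tb _ β (le_of_lt hβ)
          (NEP.update_nonneg hc0 hx0) _ (NEP.chg c b1 q3)
          (NEP.chg_nonneg q3 (hc0 q3) hb10)
          (fun v => le_trans (NEP.chg_le q3 (hc0 q3) hb10 v) (hb1β v))
          q2 (NEP.Appr q2) (Finset.Subset.refl _)
          (Finset.mem_erase.2 ⟨Ne.symm hq32, Finset.mem_erase.2 ⟨hq21, Finset.mem_univ q2⟩⟩)
          hfree hstep2
        rw [Function.update_self] at hlt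
        have he2s12 : NEP.chg c b1 q3 s12 = β - c q1 / 5 := by
          rw [NEP.chg_eq_of_not_mem n12_3, hb1s12]
        have he2s23 : NEP.chg c b1 q3 s23 = β - c q3 / 5 := by
          rw [NEP.chg_eq_of_mem m23_3, half3b1, hb1s23, min_eq_right (by linarith [hcq3le])]
        have he2ex : ∀ v ∈ NEP.exv q2, NEP.chg c b1 q3 v = β := by
          intro v hv
          rw [NEP.chg_eq_of_not_mem (fun h => hq32 ((NEP.Dexv q2 q3 v hv).1 h))]
          exact hb1ex q2 hq21 v hv
        rw [hsum2 (NEP.chg c b1 q3), he2s12, he2s23, NEP.sum_exv q2 _ β he2ex] at hlt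
        linarith
      -- ===== the final contradiction =====
      by_cases hreg : α2 ≤ β - c q1 / 5
      · have h1 := hcmp1 q2 hq21
        linarith [hc3β q1]
      · push_neg at hreg
        have hminv : min (β - c q1 / 5) α2 = β - c q1 / 5 := min_eq_left (le_of_lt hreg)
        rw [hminv] at hC2eq
        rw [hC3] at hM2le hα2le
        linarith [hm2α]
    ·
      -- CASE 2a : q1 ~ q2, q1 ~ q3, q2 ~ q4, q3 ~ q4
      obtain ⟨h13, h24, h34, hn23⟩ := NEP.Dpat2a q1 q2 q3 q4 (Ne.symm hq21) (Ne.symm hq31)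
        (Ne.symm hq41) (Ne.symm hq32) (Ne.symm hq42) (Ne.symm hq43) hadj12 hadj14
      set s12 := NEP.sh q1 q2 with hs12def
      set s13 := NEP.sh q1 q3 with hs13def
      set s24 := NEP.sh q2 q4 with hs24def
      set s34 := NEP.sh q3 q4 with hs34def
      have m12_1 : s12 ∈ NEP.Appr q1 := (NEP.Dmem q1 q2 q1 hadj12).2 (Or.inl rfl)
      have m12_2 : s12 ∈ NEP.Appr q2 := (NEP.Dmem q1 q2 q2 hadj12).2 (Or.inr rfl)
      have n12_3 : s12 ∉ NEP.Appr q3 := fun h => by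
        rcases (NEP.Dmem q1 q2 q3 hadj12).1 h with h' | h'
        exacts [hq31 h', hq32 h']
      have n12_4 : s12 ∉ NEP.Appr q4 := fun h => by
        rcases (NEP.Dmem q1 q2 q4 hadj12).1 h with h' | h'
        exacts [hq41 h', hq42 h']
      have m13_1 : s13 ∈ NEP.Appr q1 := (NEP.Dmem q1 q3 q1 h13).2 (Or.inl rfl)
      have m13_3 : s13 ∈ NEP.Appr q3 := (NEP.Dmem q1 q3 q3 h13).2 (Or.inr rfl)
      have n13_2 : s13 ∉ NEP.Appr q2 := fun h => by
        rcases (NEP.Dmem q1 q3 q2 h13).1 h with h' | h'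
        exacts [hq21 h', Ne.symm hq32 h']
      have n13_4 : s13 ∉ NEP.Appr q4 := fun h => by
        rcases (NEP.Dmem q1 q3 q4 h13).1 h with h' | h'
        exacts [hq41 h', hq43 h']
      have m24_2 : s24 ∈ NEP.Appr q2 := (NEP.Dmem q2 q4 q2 h24).2 (Or.inl rfl)
      have m24_4 : s24 ∈ NEP.Appr q4 := (NEP.Dmem q2 q4 q4 h24).2 (Or.inr rfl)
      have n24_1 : s24 ∉ NEP.Appr q1 := fun h => by
        rcases (NEP.Dmem q2 q4 q1 h24).1 h with h' | h'
        exacts [Ne.symm hq21 h', Ne.symm hq41 h']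
      have n24_3 : s24 ∉ NEP.Appr q3 := fun h => by
        rcases (NEP.Dmem q2 q4 q3 h24).1 h with h' | h'
        exacts [hq32 h', Ne.symm hq43 h']
      have m34_3 : s34 ∈ NEP.Appr q3 := (NEP.Dmem q3 q4 q3 h34).2 (Or.inl rfl)
      have m34_4 : s34 ∈ NEP.Appr q4 := (NEP.Dmem q3 q4 q4 h34).2 (Or.inr rfl)
      have n34_1 : s34 ∉ NEP.Appr q1 := fun h => by
        rcases (NEP.Dmem q3 q4 q1 h34).1 h with h' | h'
        exacts [Ne.symm hq31 h', Ne.symm hq41 h']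
      have n34_2 : s34 ∉ NEP.Appr q2 := fun h => by
        rcases (NEP.Dmem q3 q4 q2 h34).1 h with h' | h'
        exacts [Ne.symm hq32 h', Ne.symm hq42 h']
      have hsum2 : ∀ f : Fin 16 → ℝ,
          ∑ v ∈ NEP.Appr q2, f v = f s12 + f s24 + ∑ v ∈ NEP.exv q2, f v :=fun f => by
        rw [NEP.sum_appr q2 q1 q4 (NEP.Dsym _ _ hadj12) h24 (Ne.symm hq41) f,
          NEP.Dshsym q2 q1]
      have hsum3 : ∀ f : Fin 16 → ℝ,
          ∑ v ∈ NEP.Appr q3, f v = f s13 + f s34 + ∑ v ∈ NEP.exv q3, f v := fun f => by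
        rw [NEP.sum_appr q3 q1 q4 (NEP.Dsym _ _ h13) h34 (Ne.symm hq41) f,
          NEP.Dshsym q3 q1]
      have hsum4 : ∀ f : Fin 16 → ℝ,
          ∑ v ∈ NEP.Appr q4, f v = f s24 + f s34 + ∑ v ∈ NEP.exv q4, f v := fun f => by
        rw [NEP.sum_appr q4 q2 q3 (NEP.Dsym _ _ h24) (NEP.Dsym _ _ h34) (Ne.symm hq32) f,
          NEP.Dshsym q4 q2, NEP.Dshsym q4 q3]
      -- money after step 1
      have hb1v : ∀ v, b1 v = if v ∈ NEP.Appr q1 then β - c q1 / 5 else β := by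
        intro v
        rw [hb1def]
        unfold NEP.chg
        rw [hu]
        split
        · show β - min β (c q1 / 5) = _
          rw [min_eq_right (by linarith)]
        · rfl
      have hb1s12 : b1 s12 = β - c q1 / 5 := by rw [hb1v s12, if_pos m12_1]
      have hb1s13 : b1 s13 = β - c q1 / 5 := by rw [hb1v s13, if_pos m13_1]
      have hb1s24 : b1 s24 = β := by rw [hb1v s24, if_neg n24_1]
      have hb1s34 : b1 s34 = β := by rw [hb1v s34, if_neg n34_1]
      have hb1ex : ∀ p', p' ≠ q1 → ∀ v ∈ NEP.exv p', b1 v = β := by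
        intro p' hp' v hv
        rw [hb1v v, if_neg (fun h => hp' ((NEP.Dexv p' q1 v hv).1 h).symm)]
      -- the coefficient of q2 at step 2
      set α2 := NEP.alf c b1 q2 with hα2def
      set m2 := min β α2 with hm2def
      have hα2_0 : 0 ≤ α2 := NEP.alf_nonneg (hc0 q2) hb10
      have hα2five : c q2 ≤ 5 * α2 := NEP.cost_le_five_alf hq2a
      have hm2β : m2 ≤ β := min_le_left _ _
      have hm2α : m2 ≤ α2 := min_le_right _ _
      have hm2ge : c q2 / 5 ≤ m2 := le_min (by linarith) (by linarith)
      have hm2_0 : 0 ≤ m2 := le_min (le_of_lt hβ) hα2_0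
      have hC2eq : min (β - c q1 / 5) α2 + 4 * m2 = c q2 := by
        have h := NEP.alf_mem hq2a (hc0 q2) hb10
        rw [NEP.mem_afd, hsum2 (fun v => min (b1 v) α2), hb1s12, hb1s24,
          NEP.sum_exv q2 _ m2 (fun v hv => by rw [hb1ex q2 hq21 v hv])] at h
        linarith [h]
      -- money after step 2
      have hb2v : ∀ v, b2 v = if v ∈ NEP.Appr q2 then b1 v - min (b1 v) α2 else b1 v := by
        intro v
        rw [hb2def]
        rfl
      have hb2s13 : b2 s13 = β - c q1 / 5 := by rw [hb2v s13, if_neg n13_2, hb1s13]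
      have hb2s24 : b2 s24 = β - m2 := by rw [hb2v s24, if_pos m24_2, hb1s24]
      have hb2s34 : b2 s34 = β := by rw [hb2v s34, if_neg n34_2, hb1s34]
      have hb2ex : ∀ p', p' ≠ q1 → p' ≠ q2 → ∀ v ∈ NEP.exv p', b2 v = β := by
        intro p' hp1 hp2 v hv
        rw [hb2v v, if_neg (fun h => hp2 ((NEP.Dexv p' q2 v hv).1 h).symm)]
        exact hb1ex p' hp1 v hv
      -- the coefficient of q3 at step 3
      set α3 := NEP.alf c b2 q3 with hα3def
      set m3 := min β α3 with hm3def
      have hα3_0 : 0 ≤ α3 := NEP.alf_nonneg (hc0 q3) hb20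
      have hα3five : c q3 ≤ 5 * α3 := NEP.cost_le_five_alf hq3a
      have hm3β : m3 ≤ β := min_le_left _ _
      have hm3α : m3 ≤ α3 := min_le_right _ _
      have hm3ge : c q3 / 5 ≤ m3 := le_min (by linarith) (by linarith)
      have hm3_0 : 0 ≤ m3 := le_min (le_of_lt hβ) hα3_0
      have hC3eq : min (β - c q1 / 5) α3 + 4 * m3 = c q3 := by
        have h := NEP.alf_mem hq3a (hc0 q3) hb20
        rw [NEP.mem_afd, hsum3 (fun v => min (b2 v) α3), hb2s13, hb2s34,
          NEP.sum_exv q3 _ m3 (fun v hv => by rw [hb2ex q3 hq31 hq32 v hv])] at h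
        linarith [h]
      -- money after step 3
      have hb3v : ∀ v, b3 v = if v ∈ NEP.Appr q3 then b2 v - min (b2 v) α3 else b2 v := by
        intro v
        rw [hb3def]
        rfl
      have hb3s24 : b3 s24 = β - m2 := by rw [hb3v s24, if_neg n24_3, hb2s24]
      have hb3s34 : b3 s34 = β - m3 := by rw [hb3v s34, if_pos m34_3, hb2s34]
      have hb3ex4 : ∀ v ∈ NEP.exv q4, b3 v = β := by
        intro v hv
        rw [hb3v v, if_neg (fun h => hq43 ((NEP.Dexv q4 q3 v hv).1 h).symm)]
        exact hb2ex q4 hq41 hq42 v hv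
      have hpool4 : ∑ v ∈ NEP.Appr q4, b3 v = 5 * β - m2 - m3 := by
        rw [hsum4 b3, hb3s24, hb3s34, NEP.sum_exv q4 b3 β hb3ex4]
        ring
      -- ===== drain of q4 =====
      have hM4le : 5 * β - m2 - m3 ≤ c q4 := by
        have hx0 : (0:ℝ) ≤ 5 * β - m2 - m3 := by linarith
        apply hDevle q4 _ hx0
        by_contra hnp
        have hstep1 := NEP.run_step_not tb (Function.update c q4 (5 * β - m2 - m3))
          Finset.univ b0 q4 q1 (Finset.mem_univ q4) hnp (Finset.mem_univ q1) (Ne.symm hq41)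
          (by rw [NEP.afd_update_ne (Ne.symm hq41)]; exact hq1a)
          (by
            intro r _ hr1 hr4 hra
            rw [NEP.afd_update_ne hr4] at hra
            rw [NEP.key_update_ne tb (Ne.symm hq41), NEP.key_update_ne tb hr4]
            exact hkey1 r (Finset.mem_univ r) hr1 hra)
        rw [NEP.chg_update_ne (Ne.symm hq41), ← hb1def] at hstep1
        have hstep2 := NEP.run_step_not tb (Function.update c q4 (5 * β - m2 - m3))
          _ b1 q4 q2 (Finset.mem_erase.2 ⟨hq41, Finset.mem_univ q4⟩) hstep1
          (Finset.mem_erase.2 ⟨hq21, Finset.mem_univ q2⟩) (Ne.symm hq42)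
          (by rw [NEP.afd_update_ne (Ne.symm hq42)]; exact hq2a)
          (by
            intro r hrR hr2 hr4 hra
            rw [NEP.afd_update_ne hr4] at hra
            rw [NEP.key_update_ne tb (Ne.symm hq42), NEP.key_update_ne tb hr4]
            exact hkey2 r hrR hr2 hra)
        rw [NEP.chg_update_ne (Ne.symm hq42), ← hb2def] at hstep2
        have hstep3 := NEP.run_step_not tb (Function.update c q4 (5 * β - m2 - m3))
          _ b2 q4 q3 (Finset.mem_erase.2 ⟨hq42, Finset.mem_erase.2 ⟨hq41, Finset.mem_univ q4⟩⟩)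
          hstep2
          (Finset.mem_erase.2 ⟨hq32, Finset.mem_erase.2 ⟨hq31, Finset.mem_univ q3⟩⟩)
          (Ne.symm hq43)
          (by rw [NEP.afd_update_ne (Ne.symm hq43)]; exact hq3a)
          (by
            intro r hrR hr3 hr4 hra
            rcases NEP.Dall q1 q2 q3 q4 r (Ne.symm hq21) (Ne.symm hq31) (Ne.symm hq41)
              (Ne.symm hq32) (Ne.symm hq42) (Ne.symm hq43) with h | h | h | h
            · exact absurd h (Finset.mem_erase.1 (Finset.mem_erase.1 hrR).2).1
            · exact absurd h (Finset.mem_erase.1 hrR).1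
            · exact absurd h hr3
            · exact absurd h hr4)
        rw [NEP.chg_update_ne (Ne.symm hq43), ← hb3def] at hstep3
        have hfree : ∀ q ∈ ((Finset.univ.erase q1).erase q2).erase q3, q ≠ q4 →
            ∀ v ∈ NEP.Appr q4, v ∉ NEP.Appr q := by
          intro q hq hqp v hv
          rcases NEP.Dall q1 q2 q3 q4 q (Ne.symm hq21) (Ne.symm hq31) (Ne.symm hq41)
            (Ne.symm hq32) (Ne.symm hq42) (Ne.symm hq43) with h | h | h | h
          · exact absurd h (Finset.mem_erase.1 (Finset.mem_erase.1 (Finset.mem_erase.1 hq).2).2).1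
          · exact absurd h (Finset.mem_erase.1 (Finset.mem_erase.1 hq).2).1
          · exact absurd h (Finset.mem_erase.1 hq).1
          · exact absurd h hqp
        have hlt := NEP.pool_lt tb _ β (le_of_lt hβ)
          (NEP.update_nonneg hc0 hx0) _ b3 hb30 hb3β q4 (NEP.Appr q4)
          (Finset.Subset.refl _)
          (Finset.mem_erase.2 ⟨hq43, Finset.mem_erase.2 ⟨hq42,
            Finset.mem_erase.2 ⟨hq41, Finset.mem_univ q4⟩⟩⟩)
          hfree hstep3
        rw [Function.update_self, hpool4] at hlt
        exact absurd hlt (lt_irrefl _)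
      have hC4 : c q4 = 5 * β - m2 - m3 := by
        have h := NEP.cost_le_pool hq4a
        rw [hpool4] at h
        linarith
      -- the coefficient of q4 at step 3
      have half4b2 : NEP.alf c b2 q4 = β - m3 / 4 ∧ (NEP.afd c b2 q4).Nonempty := by
        apply NEP.alf_eq
        · rw [hsum4 (fun v => min (b2 v) (β - m3 / 4)), hb2s24, hb2s34,
            NEP.sum_exv q4 _ (β - m3 / 4)
              (fun v hv => by rw [hb2ex q4 hq41 hq42 v hv, min_eq_right (by linarith)]),
            min_eq_left (by linarith [hc3β q2]),
            min_eq_right (by linarith), hC4]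
          ring
        · obtain ⟨v, hv⟩ := NEP.Dexne q4
          refine ⟨v, NEP.Dexsub q4 hv, ?_⟩
          rw [hb2ex q4 hq41 hq42 v hv]
          linarith
      -- ===== the deviation of q3 =====
      have hM3le : 4 * β - c q1 / 5 + m3 / 4 ≤ c q3 := by
        have hx0 : (0:ℝ) ≤ 4 * β - c q1 / 5 + m3 / 4 := by linarith [hcq1le]
        apply hDevle q3 _ hx0
        by_contra hnp
        have hstep1 := NEP.run_step_not tb (Function.update c q3 (4 * β - c q1 / 5 + m3 / 4))
          Finset.univ b0 q3 q1 (Finset.mem_univ q3) hnp (Finset.mem_univ q1) (Ne.symm hq31)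
          (by rw [NEP.afd_update_ne (Ne.symm hq31)]; exact hq1a)
          (by
            intro r _ hr1 hr3 hra
            rw [NEP.afd_update_ne hr3] at hra
            rw [NEP.key_update_ne tb (Ne.symm hq31), NEP.key_update_ne tb hr3]
            exact hkey1 r (Finset.mem_univ r) hr1 hra)
        rw [NEP.chg_update_ne (Ne.symm hq31), ← hb1def] at hstep1
        have hstep2 := NEP.run_step_not tb (Function.update c q3 (4 * β - c q1 / 5 + m3 / 4))
          _ b1 q3 q2 (Finset.mem_erase.2 ⟨hq31, Finset.mem_univ q3⟩) hstep1
          (Finset.mem_erase.2 ⟨hq21, Finset.mem_univ q2⟩) (Ne.symm hq32)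
          (by rw [NEP.afd_update_ne (Ne.symm hq32)]; exact hq2a)
          (by
            intro r hrR hr2 hr3 hra
            rw [NEP.afd_update_ne hr3] at hra
            rw [NEP.key_update_ne tb (Ne.symm hq32), NEP.key_update_ne tb hr3]
            exact hkey2 r hrR hr2 hra)
        rw [NEP.chg_update_ne (Ne.symm hq32), ← hb2def] at hstep2
        have hstep3 := NEP.run_step_not tb (Function.update c q3 (4 * β - c q1 / 5 + m3 / 4))
          _ b2 q3 q4 (Finset.mem_erase.2 ⟨hq32, Finset.mem_erase.2 ⟨hq31, Finset.mem_univ q3⟩⟩)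
          hstep2
          (Finset.mem_erase.2 ⟨hq42, Finset.mem_erase.2 ⟨hq41, Finset.mem_univ q4⟩⟩) hq43
          (by rw [NEP.afd_update_ne hq43]; exact half4b2.2)
          (by
            intro r hrR hr4 hr3 hra
            rcases NEP.Dall q1 q2 q3 q4 r (Ne.symm hq21) (Ne.symm hq31) (Ne.symm hq41)
              (Ne.symm hq32) (Ne.symm hq42) (Ne.symm hq43) with h | h | h | h
            · exact absurd h (Finset.mem_erase.1 (Finset.mem_erase.1 hrR).2).1
            · exact absurd h (Finset.mem_erase.1 hrR).1
            · exact absurd h hr3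
            · exact absurd h hr4)
        rw [NEP.chg_update_ne hq43] at hstep3
        have hfree : ∀ q ∈ ((Finset.univ.erase q1).erase q2).erase q4, q ≠ q3 →
            ∀ v ∈ NEP.Appr q3, v ∉ NEP.Appr q := by
          intro q hq hqp v hv
          rcases NEP.Dall q1 q2 q3 q4 q (Ne.symm hq21) (Ne.symm hq31) (Ne.symm hq41)
            (Ne.symm hq32) (Ne.symm hq42) (Ne.symm hq43) with h | h | h | h
          · exact absurd h (Finset.mem_erase.1 (Finset.mem_erase.1 (Finset.mem_erase.1 hq).2).2).1
          · exact absurd h (Finset.mem_erase.1 (Finset.mem_erase.1 hq).2).1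
          · exact absurd h hqp
          · exact absurd h (Finset.mem_erase.1 hq).1
        have hlt := NEP.pool_lt tb _ β (le_of_lt hβ)
          (NEP.update_nonneg hc0 hx0) _ (NEP.chg c b2 q4)
          (NEP.chg_nonneg q4 (hc0 q4) hb20)
          (fun v => le_trans (NEP.chg_le q4 (hc0 q4) hb20 v) (hb2β v))
          q3 (NEP.Appr q3) (Finset.Subset.refl _)
          (Finset.mem_erase.2 ⟨Ne.symm hq43, Finset.mem_erase.2 ⟨hq32,
            Finset.mem_erase.2 ⟨hq31, Finset.mem_univ q3⟩⟩⟩)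
          hfree hstep3
        rw [Function.update_self] at hlt
        have he2s13 : NEP.chg c b2 q4 s13 = β - c q1 / 5 := by
          rw [NEP.chg_eq_of_not_mem n13_4, hb2s13]
        have he2s34 : NEP.chg c b2 q4 s34 = m3 / 4 := by
          rw [NEP.chg_eq_of_mem m34_4, half4b2.1, hb2s34, min_eq_right (by linarith)]
          ring
        have he2ex : ∀ v ∈ NEP.exv q3, NEP.chg c b2 q4 v = β := by
          intro v hv
          rw [NEP.chg_eq_of_not_mem (fun h => hq43 ((NEP.Dexv q3 q4 v hv).1 h)),
            ]
          exact hb2ex q3 hq31 hq32 v hv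
        rw [hsum3 (NEP.chg c b2 q4), he2s13, he2s34, NEP.sum_exv q3 _ β he2ex] at hlt
        linarith
      have hm3_45 : 4 * β / 5 ≤ m3 := by
        have h := min_le_left (β - c q1 / 5) α3
        linarith [hC3eq, hM3le]
      -- the third-step ordering condition
      have hα3le : α3 ≤ β - m3 / 4 := by
        have hk := hkey3 q4 (Finset.mem_erase.2 ⟨hq42, Finset.mem_erase.2 ⟨hq41,
          Finset.mem_univ q4⟩⟩) hq43 half4b2.2
        have h2 := NEP.key_fst tb hk
        rwa [half4b2.1] at h2
      have hm3eq : m3 = 4 * β / 5 := by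
        have : m3 ≤ 4 * β / 5 := by linarith
        linarith
      -- the coefficients of q3, q4 at step 2
      have hagree3 : ∀ v ∈ NEP.Appr q3, b1 v = b2 v := by
        intro v hv
        rw [hb2v v, if_neg (NEP.Ddisj q3 q2 (fun ha => hn23 (NEP.Dsym _ _ ha))
          hq32 v hv)]
      have half3b1 : NEP.alf c b1 q3 = α3 := by
        rw [hα3def]
        unfold NEP.alf
        rw [NEP.afd_congr_b hagree3]
      have hne3b1 : (NEP.afd c b1 q3).Nonempty := by
        rw [NEP.afd_congr_b hagree3]
        exact hq3a
      have hApp4b1 : ∀ v ∈ NEP.Appr q4, b1 v = β := by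
        intro v hv
        rw [(NEP.Dapp q4 q2 q3 (NEP.Dsym _ _ h24) (NEP.Dsym _ _ h34) (Ne.symm hq32)).1] at hv
        rcases Finset.mem_insert.1 hv with h | hv
        · rw [h, NEP.Dshsym q4 q2]; exact hb1s24
        rcases Finset.mem_insert.1 hv with h | hv
        · rw [h, NEP.Dshsym q4 q3]; exact hb1s34
        · exact hb1ex q4 hq41 v hv
      obtain ⟨half4b1, hne4b1⟩ := NEP.alf_const c b1 q4 hApp4b1 hcq4le
      -- the second-step ordering condition
      have hα2le : α2 ≤ α3 := by
        have hk := hkey2 q3 (Finset.mem_erase.2 ⟨hq31, Finset.mem_univ q3⟩) hq32 hne3b1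
        have h2 := NEP.key_fst tb hk
        rwa [← hα2def, half3b1] at h2
      have hm2le : m2 ≤ 4 * β / 5 := by
        calc m2 ≤ α2 := hm2α
        _ ≤ α3 := hα2le
        _ ≤ β - m3 / 4 := hα3le
        _ = 4 * β / 5 := by rw [hm3eq]; ring
      -- ===== the deviation of q2 =====
      have hM2le : 5 * β - c q1 / 5 - c q4 / 5 ≤ c q2 := by
        have hx0 : (0:ℝ) ≤ 5 * β - c q1 / 5 - c q4 / 5 := by linarith [hcq1le, hcq4le]
        apply hDevle q2 _ hx0
        by_contra hnp
        have hstep1 := NEP.run_step_not tb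
          (Function.update c q2 (5 * β - c q1 / 5 - c q4 / 5)) Finset.univ b0 q2 q1
          (Finset.mem_univ q2) hnp (Finset.mem_univ q1) (Ne.symm hq21)
          (by rw [NEP.afd_update_ne (Ne.symm hq21)]; exact hq1a)
          (by
            intro r _ hr1 hr2 hra
            rw [NEP.afd_update_ne hr2] at hra
            rw [NEP.key_update_ne tb (Ne.symm hq21), NEP.key_update_ne tb hr2]
            exact hkey1 r (Finset.mem_univ r) hr1 hra)
        rw [NEP.chg_update_ne (Ne.symm hq21), ← hb1def] at hstep1
        have hstep2 := NEP.run_step_not tb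
          (Function.update c q2 (5 * β - c q1 / 5 - c q4 / 5)) _ b1 q2 q4
          (Finset.mem_erase.2 ⟨hq21, Finset.mem_univ q2⟩) hstep1
          (Finset.mem_erase.2 ⟨hq41, Finset.mem_univ q4⟩) hq42
          (by rw [NEP.afd_update_ne hq42]; exact hne4b1)
          (by
            intro r hrR hr4 hr2 hra
            rw [NEP.afd_update_ne hr2] at hra
            rw [NEP.key_update_ne tb hq42, NEP.key_update_ne tb hr2]
            rcases NEP.Dall q1 q2 q3 q4 r (Ne.symm hq21) (Ne.symm hq31) (Ne.symm hq41)
              (Ne.symm hq32) (Ne.symm hq42) (Ne.symm hq43) with h | h | h | h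
            · exact absurd h (Finset.mem_erase.1 hrR).1
            · exact absurd h hr2
            · rw [h]
              apply NEP.key_of_lt tb
              rw [half4b1, half3b1]
              have : c q4 / 5 < 4 * β / 5 := by
                rw [hC4, hm3eq]
                linarith [hm2ge, hc3β q2]
              linarith [hm3α, hm3eq]
            · exact absurd h hr4)
        rw [NEP.chg_update_ne hq42] at hstep2
        have hfree : ∀ q ∈ (Finset.univ.erase q1).erase q4, q ≠ q2 →
            ∀ v ∈ NEP.Appr q2, v ∉ NEP.Appr q := by
          intro q hq hqp v hv
          rcases NEP.Dall q1 q2 q3 q4 q (Ne.symm hq21) (Ne.symm hq31) (Ne.symm hq41)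
            (Ne.symm hq32) (Ne.symm hq42) (Ne.symm hq43) with h | h | h | h
          · exact absurd h (Finset.mem_erase.1 (Finset.mem_erase.1 hq).2).1
          · exact absurd h hqp
          · rw [h]
            exact NEP.Ddisj q2 q3 hn23 (Ne.symm hq32) v hv
          · exact absurd h (Finset.mem_erase.1 hq).1
        have hlt := NEP.pool_lt tb _ β (le_of_lt hβ)
          (NEP.update_nonneg hc0 hx0) _ (NEP.chg c b1 q4)
          (NEP.chg_nonneg q4 (hc0 q4) hb10)
          (fun v => le_trans (NEP.chg_le q4 (hc0 q4) hb10 v) (hb1β v))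
          q2 (NEP.Appr q2) (Finset.Subset.refl _)
          (Finset.mem_erase.2 ⟨Ne.symm hq42, Finset.mem_erase.2 ⟨hq21, Finset.mem_univ q2⟩⟩)
          hfree hstep2
        rw [Function.update_self] at hlt
        have he2s12 : NEP.chg c b1 q4 s12 = β - c q1 / 5 := by
          rw [NEP.chg_eq_of_not_mem n12_4, hb1s12]
        have he2s24 : NEP.chg c b1 q4 s24 = β - c q4 / 5 := by
          rw [NEP.chg_eq_of_mem m24_4, half4b1, hb1s24, min_eq_right (by linarith [hcq4le])]
        have he2ex : ∀ v ∈ NEP.exv q2, NEP.chg c b1 q4 v = β := by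
          intro v hv
          rw [NEP.chg_eq_of_not_mem (fun h => hq42 ((NEP.Dexv q2 q4 v hv).1 h))]
          exact hb1ex q2 hq21 v hv
        rw [hsum2 (NEP.chg c b1 q4), he2s12, he2s24, NEP.sum_exv q2 _ β he2ex] at hlt
        linarith
      -- ===== the final contradiction =====
      by_cases hreg : α2 ≤ β - c q1 / 5
      · have h1 := hcmp1 q2 hq21
        linarith [hc3β q1]
      · push_neg at hreg
        have hminv : min (β - c q1 / 5) α2 = β - c q1 / 5 := min_eq_left (le_of_lt hreg)
        rw [hminv] at hC2eq
        rw [hC4, hm3eq] at hM2le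
        linarith [hm2le]

  · -- CASE 1 : the first two selected projects are non-adjacent
    obtain ⟨h13, h14, h23, h24, hn34⟩ := NEP.Dpat1 q1 q2 q3 q4 (Ne.symm hq21) (Ne.symm hq31)
      (Ne.symm hq41) (Ne.symm hq32) (Ne.symm hq42) (Ne.symm hq43) hadj12
    set s13 := NEP.sh q1 q3 with hs13def
    set s14 := NEP.sh q1 q4 with hs14def
    set s23 := NEP.sh q2 q3 with hs23def
    set s24 := NEP.sh q2 q4 with hs24def
    have m13_1 : s13 ∈ NEP.Appr q1 := (NEP.Dmem q1 q3 q1 h13).2 (Or.inl rfl)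
    have m13_3 : s13 ∈ NEP.Appr q3 := (NEP.Dmem q1 q3 q3 h13).2 (Or.inr rfl)
    have n13_2 : s13 ∉ NEP.Appr q2 := fun h => by
      rcases (NEP.Dmem q1 q3 q2 h13).1 h with h' | h'
      exacts [hq21 h', (Ne.symm hq32) h']
    have n13_4 : s13 ∉ NEP.Appr q4 := fun h => by
      rcases (NEP.Dmem q1 q3 q4 h13).1 h with h' | h'
      exacts [hq41 h', hq43 h']
    have m14_1 : s14 ∈ NEP.Appr q1 := (NEP.Dmem q1 q4 q1 h14).2 (Or.inl rfl)
    have m14_4 : s14 ∈ NEP.Appr q4 := (NEP.Dmem q1 q4 q4 h14).2 (Or.inr rfl)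
    have n14_2 : s14 ∉ NEP.Appr q2 := fun h => by
      rcases (NEP.Dmem q1 q4 q2 h14).1 h with h' | h'
      exacts [hq21 h', (Ne.symm hq42) h']
    have n14_3 : s14 ∉ NEP.Appr q3 := fun h => by
      rcases (NEP.Dmem q1 q4 q3 h14).1 h with h' | h'
      exacts [hq31 h', (Ne.symm hq43) h']
    have m23_2 : s23 ∈ NEP.Appr q2 := (NEP.Dmem q2 q3 q2 h23).2 (Or.inl rfl)
    have m23_3 : s23 ∈ NEP.Appr q3 := (NEP.Dmem q2 q3 q3 h23).2 (Or.inr rfl)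
    have n23_1 : s23 ∉ NEP.Appr q1 := fun h => by
      rcases (NEP.Dmem q2 q3 q1 h23).1 h with h' | h'
      exacts [(Ne.symm hq21) h', (Ne.symm hq31) h']
    have n23_4 : s23 ∉ NEP.Appr q4 := fun h => by
      rcases (NEP.Dmem q2 q3 q4 h23).1 h with h' | h'
      exacts [hq42 h', hq43 h']
    have m24_2 : s24 ∈ NEP.Appr q2 := (NEP.Dmem q2 q4 q2 h24).2 (Or.inl rfl)
    have m24_4 : s24 ∈ NEP.Appr q4 := (NEP.Dmem q2 q4 q4 h24).2 (Or.inr rfl)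
    have n24_1 : s24 ∉ NEP.Appr q1 := fun h => by
      rcases (NEP.Dmem q2 q4 q1 h24).1 h with h' | h'
      exacts [(Ne.symm hq21) h', (Ne.symm hq41) h']
    have n24_3 : s24 ∉ NEP.Appr q3 := fun h => by
      rcases (NEP.Dmem q2 q4 q3 h24).1 h with h' | h'
      exacts [hq32 h', (Ne.symm hq43) h']
    have hsum1 : ∀ f : Fin 16 → ℝ,
        ∑ v ∈ NEP.Appr q1, f v = f s13 + f s14 + ∑ v ∈ NEP.exv q1, f v := fun f =>
      NEP.sum_appr q1 q3 q4 h13 h14 (Ne.symm hq43) f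
    have hsum2 : ∀ f : Fin 16 → ℝ,
        ∑ v ∈ NEP.Appr q2, f v = f s23 + f s24 + ∑ v ∈ NEP.exv q2, f v := fun f =>
      NEP.sum_appr q2 q3 q4 h23 h24 (Ne.symm hq43) f
    have hsum3 : ∀ f : Fin 16 → ℝ,
        ∑ v ∈ NEP.Appr q3, f v = f s13 + f s23 + ∑ v ∈ NEP.exv q3, f v := fun f => by
      rw [NEP.sum_appr q3 q1 q2 (NEP.Dsym _ _ h13) (NEP.Dsym _ _ h23) (Ne.symm hq21) f,
        NEP.Dshsym q3 q1, NEP.Dshsym q3 q2]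
    have hsum4 : ∀ f : Fin 16 → ℝ,
        ∑ v ∈ NEP.Appr q4, f v = f s14 + f s24 + ∑ v ∈ NEP.exv q4, f v := fun f => by
      rw [NEP.sum_appr q4 q1 q2 (NEP.Dsym _ _ h14) (NEP.Dsym _ _ h24) (Ne.symm hq21) f,
        NEP.Dshsym q4 q1, NEP.Dshsym q4 q2]
    -- money after step 1
    have hb1v : ∀ v, b1 v = if v ∈ NEP.Appr q1 then β - c q1 / 5 else β := by
      intro v
      rw [hb1def]
      unfold NEP.chg
      rw [hu]
      split
      · show β - min β (c q1 / 5) = _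
        rw [min_eq_right (by linarith)]
      · rfl
    have hb1s13 : b1 s13 = β - c q1 / 5 := by rw [hb1v s13, if_pos m13_1]
    have hb1s14 : b1 s14 = β - c q1 / 5 := by rw [hb1v s14, if_pos m14_1]
    have hb1s23 : b1 s23 = β := by rw [hb1v s23, if_neg n23_1]
    have hb1s24 : b1 s24 = β := by rw [hb1v s24, if_neg n24_1]
    have hb1ex : ∀ p', p' ≠ q1 → ∀ v ∈ NEP.exv p', b1 v = β := by
      intro p' hp' v hv
      rw [hb1v v, if_neg (fun h => hp' (((NEP.Dexv p' q1 v hv).1 h).symm ▸ rfl))]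
    -- the second-selected project has a full pool
    have hApp2b1 : ∀ v ∈ NEP.Appr q2, b1 v = β := by
      intro v hv
      rw [hb1v v, if_neg]
      exact NEP.Ddisj q2 q1 (fun ha => hadj12 (NEP.Dsym _ _ ha)) hq21 v hv
    obtain ⟨half2b1, -⟩ := NEP.alf_const c b1 q2 hApp2b1 hcq2le
    -- money after step 2
    have hb2v : ∀ v, b2 v = if v ∈ NEP.Appr q2 then b1 v - min (b1 v) (c q2 / 5) else b1 v := by
      intro v
      rw [hb2def]
      unfold NEP.chg
      rw [half2b1]
    have hb2s13 : b2 s13 = β - c q1 / 5 := by rw [hb2v s13, if_neg n13_2, hb1s13]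
    have hb2s14 : b2 s14 = β - c q1 / 5 := by rw [hb2v s14, if_neg n14_2, hb1s14]
    have hb2s23 : b2 s23 = β - c q2 / 5 := by
      rw [hb2v s23, if_pos m23_2, hb1s23, min_eq_right (by linarith)]
    have hb2s24 : b2 s24 = β - c q2 / 5 := by
      rw [hb2v s24, if_pos m24_2, hb1s24, min_eq_right (by linarith)]
    have hb2ex : ∀ p', p' ≠ q1 → p' ≠ q2 → ∀ v ∈ NEP.exv p', b2 v = β := by
      intro p' hp1 hp2 v hv
      rw [hb2v v, if_neg (fun h => hp2 (((NEP.Dexv p' q2 v hv).1 h).symm ▸ rfl))]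
      exact hb1ex p' hp1 v hv
    have hpool3 : ∑ v ∈ NEP.Appr q3, b2 v = 5 * β - c q1 / 5 - c q2 / 5 := by
      rw [hsum3 b2, hb2s13, hb2s23, NEP.sum_exv q3 b2 β (hb2ex q3 hq31 hq32)]
      ring
    -- ===== drain of q3 =====
    have hM3le : 5 * β - c q1 / 5 - c q2 / 5 ≤ c q3 := by
      have hx0 : (0:ℝ) ≤ 5 * β - c q1 / 5 - c q2 / 5 := by linarith
      apply hDevle q3 _ hx0
      by_contra hnp
      have hstep1 := NEP.run_step_not tb (Function.update c q3 (5 * β - c q1 / 5 - c q2 / 5))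
        Finset.univ b0 q3 q1 (Finset.mem_univ q3) hnp (Finset.mem_univ q1) (Ne.symm hq31)
        (by rw [NEP.afd_update_ne (Ne.symm hq31)]; exact hq1a)
        (by
          intro r _ hr1 hr3 hra
          rw [NEP.afd_update_ne hr3] at hra
          rw [NEP.key_update_ne tb (Ne.symm hq31), NEP.key_update_ne tb hr3]
          exact hkey1 r (Finset.mem_univ r) hr1 hra)
      rw [NEP.chg_update_ne (Ne.symm hq31), ← hb1def] at hstep1
      have hstep2 := NEP.run_step_not tb (Function.update c q3 (5 * β - c q1 / 5 - c q2 / 5))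
        _ b1 q3 q2 (Finset.mem_erase.2 ⟨hq31, Finset.mem_univ q3⟩) hstep1
        (Finset.mem_erase.2 ⟨hq21, Finset.mem_univ q2⟩) (Ne.symm hq32)
        (by rw [NEP.afd_update_ne (Ne.symm hq32)]; exact hq2a)
        (by
          intro r hrR hr2 hr3 hra
          rw [NEP.afd_update_ne hr3] at hra
          rw [NEP.key_update_ne tb (Ne.symm hq32), NEP.key_update_ne tb hr3]
          exact hkey2 r hrR hr2 hra)
      rw [NEP.chg_update_ne (Ne.symm hq32), ← hb2def] at hstep2
      have hfree : ∀ q ∈ (Finset.univ.erase q1).erase q2, q ≠ q3 →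
          ∀ v ∈ NEP.Appr q3, v ∉ NEP.Appr q := by
        intro q hq hqp v hv
        rcases NEP.Dall q1 q2 q3 q4 q (Ne.symm hq21) (Ne.symm hq31) (Ne.symm hq41)
          (Ne.symm hq32) (Ne.symm hq42) (Ne.symm hq43) with h | h | h | h
        · exact absurd h (Finset.mem_erase.1 (Finset.mem_erase.1 hq).2).1
        · exact absurd h (Finset.mem_erase.1 hq).1
        · exact absurd h hqp
        · rw [h]; exact NEP.Ddisj q3 q4 hn34 (Ne.symm hq43) v hv
      have hlt := NEP.pool_lt tb _ β (le_of_lt hβ)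
        (NEP.update_nonneg hc0 hx0) _ b2 hb20 hb2β q3 (NEP.Appr q3)
        (Finset.Subset.refl _)
        (Finset.mem_erase.2 ⟨hq32, Finset.mem_erase.2 ⟨hq31, Finset.mem_univ q3⟩⟩)
        hfree hstep2
      rw [Function.update_self, hpool3] at hlt
      exact absurd hlt (lt_irrefl _)
    have hc3ub : c q3 ≤ 5 * β - c q1 / 5 - c q2 / 5 := by
      have h := NEP.cost_le_pool hq3a
      rwa [hpool3] at h
    have hC3 : c q3 = 5 * β - c q1 / 5 - c q2 / 5 := le_antisymm hc3ub hM3le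
    -- money after step 3 on q4's voters
    have hb3s14 : b3 s14 = β - c q1 / 5 := by
      rw [hb3def, NEP.chg_eq_of_not_mem n14_3, hb2s14]
    have hb3s24 : b3 s24 = β - c q2 / 5 := by
      rw [hb3def, NEP.chg_eq_of_not_mem n24_3, hb2s24]
    have hb3ex4 : ∀ v ∈ NEP.exv q4, b3 v = β := by
      intro v hv
      rw [hb3def, NEP.chg_eq_of_not_mem (fun h => hq43 ((NEP.Dexv q4 q3 v hv).1 h).symm)]
      exact hb2ex q4 hq41 hq42 v hv
    have hpool4 : ∑ v ∈ NEP.Appr q4, b3 v = 5 * β - c q1 / 5 - c q2 / 5 := by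
      rw [hsum4 b3, hb3s14, hb3s24, NEP.sum_exv q4 b3 β hb3ex4]
      ring
    -- ===== drain of q4 =====
    have hM4le : 5 * β - c q1 / 5 - c q2 / 5 ≤ c q4 := by
      have hx0 : (0:ℝ) ≤ 5 * β - c q1 / 5 - c q2 / 5 := by linarith
      apply hDevle q4 _ hx0
      by_contra hnp
      have hstep1 := NEP.run_step_not tb (Function.update c q4 (5 * β - c q1 / 5 - c q2 / 5))
        Finset.univ b0 q4 q1 (Finset.mem_univ q4) hnp (Finset.mem_univ q1) (Ne.symm hq41)
        (by rw [NEP.afd_update_ne (Ne.symm hq41)]; exact hq1a)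
        (by
          intro r _ hr1 hr4 hra
          rw [NEP.afd_update_ne hr4] at hra
          rw [NEP.key_update_ne tb (Ne.symm hq41), NEP.key_update_ne tb hr4]
          exact hkey1 r (Finset.mem_univ r) hr1 hra)
      rw [NEP.chg_update_ne (Ne.symm hq41), ← hb1def] at hstep1
      have hstep2 := NEP.run_step_not tb (Function.update c q4 (5 * β - c q1 / 5 - c q2 / 5))
        _ b1 q4 q2 (Finset.mem_erase.2 ⟨hq41, Finset.mem_univ q4⟩) hstep1
        (Finset.mem_erase.2 ⟨hq21, Finset.mem_univ q2⟩) (Ne.symm hq42)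
        (by rw [NEP.afd_update_ne (Ne.symm hq42)]; exact hq2a)
        (by
          intro r hrR hr2 hr4 hra
          rw [NEP.afd_update_ne hr4] at hra
          rw [NEP.key_update_ne tb (Ne.symm hq42), NEP.key_update_ne tb hr4]
          exact hkey2 r hrR hr2 hra)
      rw [NEP.chg_update_ne (Ne.symm hq42), ← hb2def] at hstep2
      have hstep3 := NEP.run_step_not tb (Function.update c q4 (5 * β - c q1 / 5 - c q2 / 5))
        _ b2 q4 q3 (Finset.mem_erase.2 ⟨hq42, Finset.mem_erase.2 ⟨hq41, Finset.mem_univ q4⟩⟩)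
        hstep2
        (Finset.mem_erase.2 ⟨hq32, Finset.mem_erase.2 ⟨hq31, Finset.mem_univ q3⟩⟩) (Ne.symm hq43)
        (by rw [NEP.afd_update_ne (Ne.symm hq43)]; exact hq3a)
        (by
          intro r hrR hr3 hr4 hra
          rcases NEP.Dall q1 q2 q3 q4 r (Ne.symm hq21) (Ne.symm hq31) (Ne.symm hq41)
            (Ne.symm hq32) (Ne.symm hq42) (Ne.symm hq43) with h | h | h | h
          · exact absurd h (Finset.mem_erase.1 (Finset.mem_erase.1 hrR).2).1
          · exact absurd h (Finset.mem_erase.1 hrR).1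
          · exact absurd h hr3
          · exact absurd h hr4)
      rw [NEP.chg_update_ne (Ne.symm hq43), ← hb3def] at hstep3
      have hfree : ∀ q ∈ ((Finset.univ.erase q1).erase q2).erase q3, q ≠ q4 →
          ∀ v ∈ NEP.Appr q4, v ∉ NEP.Appr q := by
        intro q hq hqp v hv
        rcases NEP.Dall q1 q2 q3 q4 q (Ne.symm hq21) (Ne.symm hq31) (Ne.symm hq41)
          (Ne.symm hq32) (Ne.symm hq42) (Ne.symm hq43) with h | h | h | h
        · exact absurd h (Finset.mem_erase.1 (Finset.mem_erase.1 (Finset.mem_erase.1 hq).2).2).1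
        · exact absurd h (Finset.mem_erase.1 (Finset.mem_erase.1 hq).2).1
        · exact absurd h (Finset.mem_erase.1 hq).1
        · exact absurd h hqp
      have hlt := NEP.pool_lt tb _ β (le_of_lt hβ)
        (NEP.update_nonneg hc0 hx0) _ b3 hb30 hb3β q4 (NEP.Appr q4)
        (Finset.Subset.refl _)
        (Finset.mem_erase.2 ⟨hq43, Finset.mem_erase.2 ⟨hq42,
          Finset.mem_erase.2 ⟨hq41, Finset.mem_univ q4⟩⟩⟩)
        hfree hstep3
      rw [Function.update_self, hpool4] at hlt
      exact absurd hlt (lt_irrefl _)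
    have hc4ub : c q4 ≤ 5 * β - c q1 / 5 - c q2 / 5 := by
      have h := NEP.cost_le_pool hq4a
      rwa [hpool4] at h
    have hC4 : c q4 = 5 * β - c q1 / 5 - c q2 / 5 := le_antisymm hc4ub hM4le
    -- exact coefficients of q3, q4 at the third step : both equal β, so tb q3 ≤ tb q4
    have half3b2 : NEP.alf c b2 q3 = β ∧ (NEP.afd c b2 q3).Nonempty := by
      apply NEP.alf_eq
      · rw [hsum3 (fun v => min (b2 v) β), hb2s13, hb2s23,
          NEP.sum_exv q3 _ β (fun v hv => by rw [hb2ex q3 hq31 hq32 v hv, min_self]),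
          min_eq_left (by linarith [hc0 q1]), min_eq_left (by linarith [hc0 q2]), hC3]
        ring
      · obtain ⟨v, hv⟩ := NEP.Dexne q3
        exact ⟨v, NEP.Dexsub q3 hv, (hb2ex q3 hq31 hq32 v hv).ge⟩
    have half4b2 : NEP.alf c b2 q4 = β ∧ (NEP.afd c b2 q4).Nonempty := by
      apply NEP.alf_eq
      · rw [hsum4 (fun v => min (b2 v) β), hb2s14, hb2s24,
          NEP.sum_exv q4 _ β (fun v hv => by rw [hb2ex q4 hq41 hq42 v hv, min_self]),
          min_eq_left (by linarith [hc0 q1]), min_eq_left (by linarith [hc0 q2]), hC4]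
        ring
      · obtain ⟨v, hv⟩ := NEP.Dexne q4
        exact ⟨v, NEP.Dexsub q4 hv, (hb2ex q4 hq41 hq42 v hv).ge⟩
    have htb34 : tb q3 ≤ tb q4 := by
      have hk := hkey3 q4 (Finset.mem_erase.2 ⟨hq42, Finset.mem_erase.2 ⟨hq41,
        Finset.mem_univ q4⟩⟩) hq43 half4b2.2
      exact NEP.key_snd tb hk (by rw [half3b2.1, half4b2.1])
    -- exact coefficients of q3, q4 at the second step
    have half3b1 : NEP.alf c b1 q3 = β - c q2 / 20 ∧ (NEP.afd c b1 q3).Nonempty := by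
      apply NEP.alf_eq
      · rw [hsum3 (fun v => min (b1 v) (β - c q2 / 20)), hb1s13, hb1s23,
          NEP.sum_exv q3 _ (β - c q2 / 20)
            (fun v hv => by rw [hb1ex q3 hq31 v hv, min_eq_right (by linarith [hc0 q2])]),
          min_eq_left (by linarith [hc3β q1, hcq2le]),
          min_eq_right (by linarith [hc0 q2]), hC3]
        ring
      · obtain ⟨v, hv⟩ := NEP.Dexne q3
        refine ⟨v, NEP.Dexsub q3 hv, ?_⟩
        rw [hb1ex q3 hq31 v hv]
        linarith [hc0 q2]
    have half4b1 : NEP.alf c b1 q4 = β - c q2 / 20 ∧ (NEP.afd c b1 q4).Nonempty := by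
      apply NEP.alf_eq
      · rw [hsum4 (fun v => min (b1 v) (β - c q2 / 20)), hb1s14, hb1s24,
          NEP.sum_exv q4 _ (β - c q2 / 20)
            (fun v hv => by rw [hb1ex q4 hq41 v hv, min_eq_right (by linarith [hc0 q2])]),
          min_eq_left (by linarith [hc3β q1, hcq2le]),
          min_eq_right (by linarith [hc0 q2]), hC4]
        ring
      · obtain ⟨v, hv⟩ := NEP.Dexne q4
        refine ⟨v, NEP.Dexsub q4 hv, ?_⟩
        rw [hb1ex q4 hq41 v hv]
        linarith [hc0 q2]
    -- the ordering condition at the second step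
    have hw4β : c q2 / 5 ≤ β - c q2 / 20 := by
      have hk := hkey2 q3 (Finset.mem_erase.2 ⟨hq31, Finset.mem_univ q3⟩) hq32 half3b1.2
      have h2 := NEP.key_fst tb hk
      rwa [half2b1, half3b1.1] at h2
    -- ===== the ε-deviation of q2 : forces c q2 = 4 β =====
    have hC2 : c q2 = 4 * β := by
      by_contra hne
      have hlt2 : c q2 / 5 < β - c q2 / 20 :=
        lt_of_le_of_ne hw4β (fun h => hne (by linarith))
      have hx5 : (c q2 + 5 * (β - c q2 / 20)) / 2 / 5
          = (c q2 / 5 + (β - c q2 / 20)) / 2 := by ring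
      have hxgt : c q2 < (c q2 + 5 * (β - c q2 / 20)) / 2 := by linarith
      have hxle : (c q2 + 5 * (β - c q2 / 20)) / 2 ≤ 5 * β := by linarith [hc0 q2, hcq2le]
      have hx0 : (0:ℝ) ≤ (c q2 + 5 * (β - c q2 / 20)) / 2 := by linarith [hc3β q2, hcq2le]
      have halfd : NEP.alf (Function.update c q2 ((c q2 + 5 * (β - c q2 / 20)) / 2)) b0 q2
          = (c q2 + 5 * (β - c q2 / 20)) / 2 / 5
          ∧ (NEP.afd (Function.update c q2 ((c q2 + 5 * (β - c q2 / 20)) / 2)) b0 q2).Nonempty := by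
        have h := NEP.alf_const (Function.update c q2 ((c q2 + 5 * (β - c q2 / 20)) / 2)) b0 q2
          (fun v _ => rfl) (by rw [Function.update_self]; exact hxle)
        rwa [Function.update_self] at h
      have hst1 := NEP.run_step tb (Function.update c q2 ((c q2 + 5 * (β - c q2 / 20)) / 2))
        Finset.univ b0 q1 (Finset.mem_univ q1)
        (by rw [NEP.afd_update_ne (Ne.symm hq21)]; exact hq1a)
        (by
          intro r _ hr1 hra
          by_cases hr2 : r = q2
          · rw [hr2]
            apply NEP.key_of_lt tb
            rw [NEP.alf_update_ne (Ne.symm hq21), hu, halfd.1, hx5]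
            have := hcmp1 q2 hq21
            linarith
          · rw [NEP.key_update_ne tb (Ne.symm hq21), NEP.key_update_ne tb hr2]
            rw [NEP.afd_update_ne hr2] at hra
            exact hkey1 r (Finset.mem_univ r) hr1 hra)
      rw [NEP.chg_update_ne (Ne.symm hq21), ← hb1def] at hst1
      have halfd1 : NEP.alf (Function.update c q2 ((c q2 + 5 * (β - c q2 / 20)) / 2)) b1 q2
          = (c q2 + 5 * (β - c q2 / 20)) / 2 / 5
          ∧ (NEP.afd (Function.update c q2 ((c q2 + 5 * (β - c q2 / 20)) / 2)) b1 q2).Nonempty := by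
        have h := NEP.alf_const (Function.update c q2 ((c q2 + 5 * (β - c q2 / 20)) / 2)) b1 q2
          hApp2b1 (by rw [Function.update_self]; exact hxle)
        rwa [Function.update_self] at h
      have hst2 := NEP.run_step tb (Function.update c q2 ((c q2 + 5 * (β - c q2 / 20)) / 2))
        _ b1 q2 (Finset.mem_erase.2 ⟨hq21, Finset.mem_univ q2⟩) halfd1.2
        (by
          intro r hrR hr2 hra
          rw [NEP.afd_update_ne hr2] at hra
          apply NEP.key_of_lt tb
          rw [NEP.alf_update_ne hr2, halfd1.1, hx5]
          rcases NEP.Dall q1 q2 q3 q4 r (Ne.symm hq21) (Ne.symm hq31) (Ne.symm hq41)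
            (Ne.symm hq32) (Ne.symm hq42) (Ne.symm hq43) with h | h | h | h
          · exact absurd h (Finset.mem_erase.1 hrR).1
          · exact absurd h hr2
          · rw [h, half3b1.1]; linarith
          · rw [h, half4b1.1]; linarith)
      have hmem : q2 ∈ NEP.run tb (Function.update c q2 ((c q2 + 5 * (β - c q2 / 20)) / 2))
          Finset.univ b0 := by
        rw [hst1]
        exact Finset.mem_insert_of_mem (by rw [hst2]; exact Finset.mem_insert_self _ _)
      have := hDevle q2 _ hx0 hmem
      linarith
    -- ===== the deviation of q1 =====
    have hM1 : 3 * β + 2 * (c q1 + c q2) / 25 ≤ c q1 := by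
      have hx0 : (0:ℝ) ≤ 3 * β + 2 * (c q1 + c q2) / 25 := by
        linarith [hc0 q1, hc0 q2]
      apply hDevle q1 _ hx0
      by_contra hnp
      -- q3 is selected first
      have hz2 : c q3 / 5 < c q2 / 5 := by rw [hC3, hC2]; linarith [hc3β q1]
      have hstep1 := NEP.run_step_not tb
        (Function.update c q1 (3 * β + 2 * (c q1 + c q2) / 25)) Finset.univ b0 q1 q3
        (Finset.mem_univ q1) hnp (Finset.mem_univ q3) hq31
        (by rw [NEP.afd_update_ne hq31]; exact (halfne0 q3).1)
        (by
          intro r _ hr3 hr1 hra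
          rw [NEP.afd_update_ne hr1] at hra
          rw [NEP.key_update_ne tb hq31, NEP.key_update_ne tb hr1]
          rcases NEP.Dall q1 q2 q3 q4 r (Ne.symm hq21) (Ne.symm hq31) (Ne.symm hq41)
            (Ne.symm hq32) (Ne.symm hq42) (Ne.symm hq43) with h | h | h | h
          · exact absurd h hr1
          · rw [h]
            apply NEP.key_of_lt tb
            rw [(halfne0 q3).2, (halfne0 q2).2]
            exact hz2
          · exact absurd h hr3
          · rw [h]
            apply NEP.key_of_eq tb _ htb34
            rw [(halfne0 q3).2, (halfne0 q4).2, hC3, hC4])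
      rw [NEP.chg_update_ne hq31] at hstep1
      -- money after q3 is selected first
      have hzβ : c q3 / 5 ≤ β := by linarith [hcq3le]
      have he1v : ∀ v, NEP.chg c b0 q3 v = if v ∈ NEP.Appr q3 then β - c q3 / 5 else β := by
        intro v
        unfold NEP.chg
        rw [(halfne0 q3).2]
        split
        · show β - min β (c q3 / 5) = _
          rw [min_eq_right hzβ]
        · rfl
      have hApp4e1 : ∀ v ∈ NEP.Appr q4, NEP.chg c b0 q3 v = β := by
        intro v hv
        rw [he1v v, if_neg]
        exact fun h => NEP.Ddisj q3 q4 hn34 (Ne.symm hq43) v h hv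
      obtain ⟨half4e1, -⟩ := NEP.alf_const c (NEP.chg c b0 q3) q4 hApp4e1 hcq4le
      have hstep2 := NEP.run_step_not tb
        (Function.update c q1 (3 * β + 2 * (c q1 + c q2) / 25)) _ (NEP.chg c b0 q3) q1 q4
        (Finset.mem_erase.2 ⟨Ne.symm hq31, Finset.mem_univ q1⟩) hstep1
        (Finset.mem_erase.2 ⟨hq43, Finset.mem_univ q4⟩) hq41
        (by rw [NEP.afd_update_ne hq41]
            exact NEP.afd_nonempty (le_of_lt hβ) (hc0 q4)
              (NEP.chg_nonneg q3 (hc0 q3) hb00)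
              (fun v => le_trans (NEP.chg_le q3 (hc0 q3) hb00 v) (hb0β v))
              (by
                rw [hsum4 (NEP.chg c b0 q3), hApp4e1 s14 m14_4, hApp4e1 s24 m24_4,
                  NEP.sum_exv q4 _ β (fun v hv => hApp4e1 v (NEP.Dexsub q4 hv))]
                linarith [hcq4le]))
        (by
          intro r hrR hr4 hr1 hra
          rw [NEP.afd_update_ne hr1] at hra
          rw [NEP.key_update_ne tb hq41, NEP.key_update_ne tb hr1]
          rcases NEP.Dall q1 q2 q3 q4 r (Ne.symm hq21) (Ne.symm hq31) (Ne.symm hq41)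
            (Ne.symm hq32) (Ne.symm hq42) (Ne.symm hq43) with h | h | h | h
          · exact absurd h hr1
          · rw [h] at hra ⊢
            apply NEP.key_of_lt tb
            rw [half4e1]
            have h5 := NEP.cost_le_five_alf hra
            have hlt45 : c q4 / 5 < c q2 / 5 := by rw [hC4, hC2]; linarith [hc3β q1]
            linarith
          · exact absurd h (Finset.mem_erase.1 hrR).1
          · exact absurd h hr4)
      rw [NEP.chg_update_ne hq41] at hstep2
      -- final pool of q1
      have hfree : ∀ q ∈ (Finset.univ.erase q3).erase q4, q ≠ q1 →
          ∀ v ∈ NEP.Appr q1, v ∉ NEP.Appr q := by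
        intro q hq hqp v hv
        rcases NEP.Dall q1 q2 q3 q4 q (Ne.symm hq21) (Ne.symm hq31) (Ne.symm hq41)
          (Ne.symm hq32) (Ne.symm hq42) (Ne.symm hq43) with h | h | h | h
        · exact absurd h hqp
        · rw [h]
          exact NEP.Ddisj q1 q2 hadj12 (Ne.symm hq21) v hv
        · exact absurd h (Finset.mem_erase.1 (Finset.mem_erase.1 hq).2).1
        · exact absurd h (Finset.mem_erase.1 hq).1
      have hlt := NEP.pool_lt tb _ β (le_of_lt hβ)
        (NEP.update_nonneg hc0 hx0) _ (NEP.chg c (NEP.chg c b0 q3) q4)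
        (NEP.chg_nonneg q4 (hc0 q4) (NEP.chg_nonneg q3 (hc0 q3) hb00))
        (fun v => le_trans (NEP.chg_le q4 (hc0 q4) (NEP.chg_nonneg q3 (hc0 q3) hb00) v)
          (le_trans (NEP.chg_le q3 (hc0 q3) hb00 v) (hb0β v)))
        q1 (NEP.Appr q1) (Finset.Subset.refl _)
        (Finset.mem_erase.2 ⟨Ne.symm hq41, Finset.mem_erase.2 ⟨Ne.symm hq31,
          Finset.mem_univ q1⟩⟩)
        hfree hstep2
      rw [Function.update_self] at hlt
      have he2s13 : NEP.chg c (NEP.chg c b0 q3) q4 s13 = β - c q3 / 5 := by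
        rw [NEP.chg_eq_of_not_mem n13_4, he1v s13, if_pos m13_3]
      have he2s14 : NEP.chg c (NEP.chg c b0 q3) q4 s14 = β - c q4 / 5 := by
        rw [NEP.chg_eq_of_mem m14_4, half4e1, hApp4e1 s14 m14_4,
          min_eq_right (by linarith [hcq4le])]
      have he2ex : ∀ v ∈ NEP.exv q1, NEP.chg c (NEP.chg c b0 q3) q4 v = β := by
        intro v hv
        rw [NEP.chg_eq_of_not_mem (fun h => hq41 ((NEP.Dexv q1 q4 v hv).1 h)),
          he1v v, if_neg (fun h => hq31 ((NEP.Dexv q1 q3 v hv).1 h))]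
      rw [hsum1 (NEP.chg c (NEP.chg c b0 q3) q4), he2s13, he2s14,
        NEP.sum_exv q1 _ β he2ex] at hlt
      rw [hC3, hC4] at hlt
      linarith
    -- ===== the final contradiction =====
    have hO1 : c q1 ≤ 5 * β - c q1 / 5 - c q2 / 5 := by
      rw [← hC3]
      exact hcmp1 q3 hq31
    rw [hC2] at hO1 hM1
    linarith
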